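/- arXiv:2404.15818 — 9 statements merged into one kernel-verified Lean document; each statement's English description precedes it below -/
import Mathlib

section
/- For every diagram D in the Gauss-code model with c ≥ 1 crossings, the mirror image satisfies d(D*) = d(−D) and d(−D*) = d(D); consequently min{d(D), d(−D), d(D*), d(−D*)} = min{d(D), d(−D)} = d̄(D). (This is Proposition 3.1: for an alternating diagram D, the warping degree of the underlying projection, defined as the minimum warping degree over the four oriented alternating diagrams D, −D, D*, −D* with that projection, equals the unoriented warping degree d̄(D).) -/
set_option linter.unusedSectionVars false
set_option linter.unusedVariables false

open Finset

section aux

variable {n : ℕ}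

lemma first_iff (P q : Fin n → Prop) (S : Finset (Fin n)) (hS : ∀ i, i ∈ S ↔ P i)
    (hne : S.Nonempty) :
    (∃ i, P i ∧ q i ∧ ∀ j, j < i → ¬ P j) ↔ q (S.min' hne) := by
  constructor
  · rintro ⟨i, hPi, hqi, hmin⟩
    have hiS : i ∈ S := (hS i).mpr hPi
    have h1 : S.min' hne ≤ i := S.min'_le i hiS
    rcases lt_or_eq_of_le h1 with h | h
    · exact absurd ((hS _).mp (S.min'_mem hne)) (hmin _ h)
    · rwa [h]
  · intro hq
    refine ⟨S.min' hne, (hS _).mp (S.min'_mem hne), hq, fun j hj hPj => ?_⟩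
    exact absurd (S.min'_le j ((hS j).mpr hPj)) (not_le.mpr hj)

lemma last_iff (P q : Fin n → Prop) (S : Finset (Fin n)) (hS : ∀ i, i ∈ S ↔ P i)
    (hne : S.Nonempty) :
    (∃ i : Fin n, P i.rev ∧ q i.rev ∧ ∀ j, j < i → ¬ P j.rev) ↔ q (S.max' hne) := by
  have key : (∃ i : Fin n, P i.rev ∧ q i.rev ∧ ∀ j, j < i → ¬ P j.rev) ↔
      (∃ k, P k ∧ q k ∧ ∀ l, k < l → ¬ P l) := by
    constructor
    · rintro ⟨i, h1, h2, h3⟩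
      refine ⟨i.rev, h1, h2, fun l hl hPl => ?_⟩
      have : l.rev < i := by
        have := Fin.rev_lt_rev.mpr hl
        rwa [Fin.rev_rev] at this
      exact h3 l.rev this (by rwa [Fin.rev_rev])
    · rintro ⟨k, h1, h2, h3⟩
      refine ⟨k.rev, by rwa [Fin.rev_rev], by rwa [Fin.rev_rev], fun j hj hPj => ?_⟩
      have : k < j.rev := by
        have := Fin.rev_lt_rev.mpr hj
        rwa [Fin.rev_rev] at this
      exact h3 j.rev this hPj
  rw [key]
  constructor
  · rintro ⟨k, hPk, hqk, hmax⟩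
    have hkS : k ∈ S := (hS k).mpr hPk
    have h1 : k ≤ S.max' hne := S.le_max' k hkS
    rcases lt_or_eq_of_le h1 with h | h
    · exact absurd ((hS _).mp (S.max'_mem hne)) (hmax _ h)
    · rwa [← h]
  · intro hq
    refine ⟨S.max' hne, (hS _).mp (S.max'_mem hne), hq, fun l hl hPl => ?_⟩
    exact absurd (S.le_max' l ((hS l).mpr hPl)) (not_le.mpr hl)

end aux

section main

variable {c : ℕ} [NeZero c]

lemma hnz : NeZero (2 * c) := ⟨by have := NeZero.ne c; omega⟩

lemma rev_cast (i : Fin (2 * c)) :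
    (((i.rev : ℕ) : ZMod (2 * c))) = -1 - ((i : ℕ) : ZMod (2 * c)) := by
  have : (i.rev : ℕ) = 2 * c - ((i : ℕ) + 1) := rfl
  rw [this, Nat.cast_sub (by have := i.isLt; omega)]
  have h : ((2 * c : ℕ) : ZMod (2 * c)) = 0 := ZMod.natCast_self _
  push_cast at h ⊢
  rw [h]
  ring

end main

/-- Gauss-code model of an oriented knot diagram with `c` crossings: `g` assigns to each
position on the circle `ZMod (2*c)` a crossing, every crossing is visited exactly twice,
and `o` (overpass information) is `true` at exactly one of the two visits. -/
def IsGaussDiagram (c : ℕ) [NeZero c] (g : ZMod (2 * c) → Fin c)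
    (o : ZMod (2 * c) → Bool) : Prop :=
  (∀ x : Fin c, (Finset.univ.filter fun t => g t = x).card = 2) ∧
  (∀ x : Fin c, (Finset.univ.filter fun t => g t = x ∧ o t = true).card = 1)

/-- The warping degree `d(D_b)` of the diagram `(g, o)` with base point `b`: the number of
crossings `x` such that `o` is `false` at the first position, in the traversal order
`b, b+1, …, b+2c-1`, that `g` maps to `x`. -/
def warpAt (c : ℕ) [NeZero c] (g : ZMod (2 * c) → Fin c) (o : ZMod (2 * c) → Bool)
    (b : ZMod (2 * c)) : ℕ :=
  (Finset.univ.filter fun x : Fin c =>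
    ∃ i : Fin (2 * c), g (b + ((i : ℕ) : ZMod (2 * c))) = x ∧
      o (b + ((i : ℕ) : ZMod (2 * c))) = false ∧
      ∀ j : Fin (2 * c), j < i → g (b + ((j : ℕ) : ZMod (2 * c))) ≠ x).card

/-- The warping degree `d(D)`: the minimum of `d(D_b)` over all base points `b`. -/
noncomputable def warp (c : ℕ) [NeZero c] (g : ZMod (2 * c) → Fin c) (o : ZMod (2 * c) → Bool) : ℕ :=
  sInf (Set.range (warpAt c g o))

lemma warpAt_mirror (c : ℕ) [NeZero c] (g : ZMod (2 * c) → Fin c) (o : ZMod (2 * c) → Bool)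
    (hD : IsGaussDiagram c g o) (b : ZMod (2 * c)) :
    warpAt c g (fun t => !(o t)) b = warpAt c (fun t => g (-t)) (fun t => o (-t)) (1 - b) := by
  haveI : NeZero (2 * c) := hnz
  unfold warpAt
  congr 1
  apply Finset.filter_congr
  intro x _
  -- the equivalence between positions
  let e : Fin (2 * c) ≃ ZMod (2 * c) :=
    { toFun := fun i => b + ((i : ℕ) : ZMod (2 * c))
      invFun := fun t => ⟨(t - b).val, ZMod.val_lt _⟩
      left_inv := fun i => by
        ext
        simp [ZMod.val_natCast, add_sub_cancel_left, Nat.mod_eq_of_lt i.isLt]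
      right_inv := fun t => by
        simp [ZMod.natCast_val, ZMod.cast_id] }
  have he : ∀ i : Fin (2 * c), e i = b + ((i : ℕ) : ZMod (2 * c)) := fun _ => rfl
  set S : Finset (Fin (2 * c)) :=
    Finset.univ.filter (fun i => g (b + ((i : ℕ) : ZMod (2 * c))) = x) with hSdef
  have hS : ∀ i, i ∈ S ↔ g (b + ((i : ℕ) : ZMod (2 * c))) = x := by
    intro i; simp [hSdef]
  have hcard : S.card = 2 :=
    (Finset.card_equiv e (fun i => by simp [hSdef, he])).trans (hD.1 x)
  have htrue : (S.filter fun i : Fin (2 * c) =>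
      o (b + ((i : ℕ) : ZMod (2 * c))) = true).card = 1 :=
    (Finset.card_equiv e (fun i => by simp [hSdef, he, and_comm])).trans (hD.2 x)
  have hne : S.Nonempty := Finset.card_pos.mp (by rw [hcard]; norm_num)
  set i1 := S.min' hne with hi1
  set i2 := S.max' hne with hi2
  have h12 : i1 < i2 := S.min'_lt_max'_of_card (by omega)
  -- exactly one of the two visits is an overpass
  obtain ⟨u, hu⟩ := Finset.card_eq_one.mp htrue
  have huS : u ∈ S ∧ o (b + ((u : ℕ) : ZMod (2 * c))) = true := by
    have : u ∈ S.filter fun i : Fin (2 * c) => o (b + ((i : ℕ) : ZMod (2 * c))) = true := by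
      rw [hu]; exact Finset.mem_singleton_self u
    simpa using this
  have hmem : ∀ z ∈ S, (o (b + ((z : ℕ) : ZMod (2 * c))) = true ↔ z = u) := by
    intro z hz
    constructor
    · intro hoz
      have : z ∈ S.filter fun i : Fin (2 * c) => o (b + ((i : ℕ) : ZMod (2 * c))) = true :=
        Finset.mem_filter.mpr ⟨hz, hoz⟩
      rw [hu] at this; simpa using this
    · rintro rfl; exact huS.2
  have hSeq : S = {i1, i2} := by
    refine (Finset.eq_of_subset_of_card_le ?_ ?_).symm
    · intro z hz
      rcases Finset.mem_insert.mp hz with rfl | hz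
      · exact S.min'_mem hne
      · rw [Finset.mem_singleton.mp hz]; exact S.max'_mem hne
    · rw [hcard, Finset.card_insert_of_notMem (by simp [h12.ne]), Finset.card_singleton]
  have hu12 : u = i1 ∨ u = i2 := by
    have := huS.1
    rw [hSeq] at this
    simpa using this
  have key : (o (b + ((i1 : ℕ) : ZMod (2 * c))) = true) ↔
      (o (b + ((i2 : ℕ) : ZMod (2 * c))) = false) := by
    rcases hu12 with rfl | rfl
    · simp only [huS.2, true_iff]
      have := hmem i2 (S.max'_mem hne)
      rw [Bool.eq_false_iff]
      intro h; exact h12.ne (this.mp h).symm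
    · have h1 := hmem i1 (S.min'_mem hne)
      constructor
      · intro h; exact absurd (h1.mp h) h12.ne
      · intro h; rw [huS.2] at h; exact absurd h (by simp)
  -- rewrite the left-hand predicate via `first_iff`
  have lhs : (∃ i : Fin (2 * c), g (b + ((i : ℕ) : ZMod (2 * c))) = x ∧
      (!(o (b + ((i : ℕ) : ZMod (2 * c))))) = false ∧
      ∀ j : Fin (2 * c), j < i → g (b + ((j : ℕ) : ZMod (2 * c))) ≠ x) ↔
      o (b + ((i1 : ℕ) : ZMod (2 * c))) = true := by
    have := first_iff (fun i => g (b + ((i : ℕ) : ZMod (2 * c))) = x)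
      (fun i => (!(o (b + ((i : ℕ) : ZMod (2 * c))))) = false) S hS hne
    rw [this]
    simp [hi1]
  -- rewrite the right-hand predicate via `last_iff`
  have pos_eq : ∀ i : Fin (2 * c),
      -((1 - b) + ((i : ℕ) : ZMod (2 * c))) = b + ((i.rev : ℕ) : ZMod (2 * c)) := by
    intro i
    rw [rev_cast]
    ring
  have rhs : (∃ i : Fin (2 * c), g (-((1 - b) + ((i : ℕ) : ZMod (2 * c)))) = x ∧
      o (-((1 - b) + ((i : ℕ) : ZMod (2 * c)))) = false ∧
      ∀ j : Fin (2 * c), j < i → g (-((1 - b) + ((j : ℕ) : ZMod (2 * c)))) ≠ x) ↔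
      o (b + ((i2 : ℕ) : ZMod (2 * c))) = false := by
    have := last_iff (fun i => g (b + ((i : ℕ) : ZMod (2 * c))) = x)
      (fun i => o (b + ((i : ℕ) : ZMod (2 * c))) = false) S hS hne
    rw [← this]
    apply exists_congr
    intro i
    rw [pos_eq]
    constructor
    · rintro ⟨h1, h2, h3⟩
      exact ⟨h1, h2, fun j hj => by rw [← pos_eq]; exact h3 j hj⟩
    · rintro ⟨h1, h2, h3⟩
      exact ⟨h1, h2, fun j hj => by rw [pos_eq]; exact h3 j hj⟩
  rw [lhs, rhs, key]

lemma warp_mirror (c : ℕ) [NeZero c] (g : ZMod (2 * c) → Fin c) (o : ZMod (2 * c) → Bool)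
    (hD : IsGaussDiagram c g o) :
    warp c g (fun t => !(o t)) = warp c (fun t => g (-t)) (fun t => o (-t)) := by
  unfold warp
  congr 1
  ext v
  simp only [Set.mem_range]
  constructor
  · rintro ⟨b, rfl⟩
    exact ⟨1 - b, (warpAt_mirror c g o hD b).symm⟩
  · rintro ⟨b, rfl⟩
    refine ⟨1 - b, ?_⟩
    rw [warpAt_mirror c g o hD (1 - b), sub_sub_cancel]

lemma isGauss_rev (c : ℕ) [NeZero c] (g : ZMod (2 * c) → Fin c) (o : ZMod (2 * c) → Bool)
    (hD : IsGaussDiagram c g o) :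
    IsGaussDiagram c (fun t => g (-t)) (fun t => o (-t)) := by
  constructor <;> intro x
  · exact (Finset.card_equiv (Equiv.neg _) (fun i => by simp)).trans (hD.1 x)
  · exact (Finset.card_equiv (Equiv.neg _) (fun i => by simp)).trans (hD.2 x)

/-- Proposition 3.1: for a diagram `D = (g, o)` with `c ≥ 1` crossings, the mirror image
`D* = (g, !o)` satisfies `d(D*) = d(-D)` and `d(-D*) = d(D)`; consequently the minimum of
the warping degrees of the four diagrams `D`, `-D`, `D*`, `-D*` equals
`min {d(D), d(-D)} = d̄(D)`, the unoriented warping degree. -/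
theorem mirror_warp_eq_reverse_warp (c : ℕ) [NeZero c] (hc : 1 ≤ c)
    (g : ZMod (2 * c) → Fin c) (o : ZMod (2 * c) → Bool) (hD : IsGaussDiagram c g o) :
    warp c g (fun t => !(o t)) = warp c (fun t => g (-t)) (fun t => o (-t)) ∧
    warp c (fun t => g (-t)) (fun t => !(o (-t))) = warp c g o ∧
    min (min (warp c g o) (warp c (fun t => g (-t)) (fun t => o (-t))))
        (min (warp c g (fun t => !(o t))) (warp c (fun t => g (-t)) (fun t => !(o (-t)))))
      = min (warp c g o) (warp c (fun t => g (-t)) (fun t => o (-t))) := by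
  have h1 : warp c g (fun t => !(o t)) = warp c (fun t => g (-t)) (fun t => o (-t)) :=
    warp_mirror c g o hD
  have h2 : warp c (fun t => g (-t)) (fun t => !(o (-t))) = warp c g o := by
    have := warp_mirror c (fun t => g (-t)) (fun t => o (-t)) (isGauss_rev c g o hD)
    simpa [neg_neg] using this
  refine ⟨h1, h2, ?_⟩
  rw [h1, h2, min_comm (warp c (fun t => g (-t)) (fun t => o (-t))) (warp c g o), min_self]
end

section
/- For every diagram D in the Gauss-code model with c ≥ 1 crossings, d(−D) = c − max over all base points b of d(D_b); hence the unoriented warping degree satisfies d̄(D) = min{ min_b d(D_b), c − max_b d(D_b) }. -/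
open Finset

section helpers

variable {c : ℕ} [NeZero c]

lemma phi_bij (b : ZMod (2 * c)) :
    Function.Bijective (fun i : Fin (2 * c) => b + ((i : ℕ) : ZMod (2 * c))) := by
  have h2c : 0 < 2 * c := by
    have := Nat.pos_of_ne_zero (NeZero.ne c); omega
  haveI : NeZero (2 * c) := ⟨by omega⟩
  rw [Fintype.bijective_iff_injective_and_card]
  refine ⟨?_, by simp [ZMod.card]⟩
  intro i j h
  have h' : ((i : ℕ) : ZMod (2 * c)) = ((j : ℕ) : ZMod (2 * c)) := by
    exact add_left_cancel h
  have hi := ZMod.val_cast_of_lt (n := 2 * c) i.isLt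
  have hj := ZMod.val_cast_of_lt (n := 2 * c) j.isLt
  have : (i : ℕ) = (j : ℕ) := by rw [← hi, ← hj, h']
  exact Fin.ext this

lemma card_filter_comp {α β : Type*} [Fintype α] [Fintype β] (e : α → β)
    (he : Function.Bijective e) (p : β → Prop) [DecidablePred p] :
    (univ.filter fun a => p (e a)).card = (univ.filter p).card := by
  apply Finset.card_bij (fun a _ => e a)
  · intro a ha; simp only [mem_filter, mem_univ, true_and] at ha ⊢; exact ha
  · intro a _ b _ h; exact he.1 h
  · intro b hb
    obtain ⟨a, rfl⟩ := he.2 b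
    exact ⟨a, by simpa using hb, rfl⟩

lemma rev_pos (b : ZMod (2 * c)) (i : Fin (2 * c)) :
    -((1 - b) + ((i : ℕ) : ZMod (2 * c))) = b + (((i.rev : Fin (2 * c)) : ℕ) : ZMod (2 * c)) := by
  have h2c : 0 < 2 * c := by
    have := Nat.pos_of_ne_zero (NeZero.ne c); omega
  have hval : ((i.rev : Fin (2 * c)) : ℕ) = 2 * c - 1 - (i : ℕ) := by
    simp [Fin.val_rev]; omega
  have hle : (i : ℕ) ≤ 2 * c - 1 := by omega
  have h1 : (1 : ℕ) ≤ 2 * c := by omega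
  have : (((i.rev : Fin (2 * c)) : ℕ) : ZMod (2 * c)) = -1 - ((i : ℕ) : ZMod (2 * c)) := by
    rw [hval, Nat.cast_sub hle, Nat.cast_sub h1]
    simp [ZMod.natCast_self]
  rw [this]; ring

lemma firstvisit {n m : ℕ} (G : Fin n → Fin m) (O : Fin n → Bool) (x : Fin m)
    (i₁ i₂ : Fin n) (hlt : i₁ < i₂)
    (hmem : ∀ i, G i = x ↔ i = i₁ ∨ i = i₂) :
    (∃ i, G i = x ∧ O i = false ∧ ∀ j, j < i → G j ≠ x) ↔ O i₁ = false := by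
  constructor
  · rintro ⟨i, hgi, hoi, hmin⟩
    rcases (hmem i).1 hgi with rfl | rfl
    · exact hoi
    · exact absurd ((hmem i₁).2 (Or.inl rfl)) (hmin i₁ hlt)
  · intro h
    refine ⟨i₁, (hmem i₁).2 (Or.inl rfl), h, ?_⟩
    intro j hj hgj
    rcases (hmem j).1 hgj with rfl | rfl
    · exact lt_irrefl _ hj
    · exact absurd hlt (asymm hj)

lemma warpAt_add (g : ZMod (2 * c) → Fin c) (o : ZMod (2 * c) → Bool)
    (hD : IsGaussDiagram c g o) (b : ZMod (2 * c)) :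
    warpAt c (fun t => g (-t)) (fun t => o (-t)) (1 - b) + warpAt c g o b = c := by
  classical
  have key : ∀ x : Fin c,
      ((∃ i : Fin (2 * c), g (-((1 - b) + ((i : ℕ) : ZMod (2 * c)))) = x ∧
          o (-((1 - b) + ((i : ℕ) : ZMod (2 * c)))) = false ∧
          ∀ j : Fin (2 * c), j < i → g (-((1 - b) + ((j : ℕ) : ZMod (2 * c)))) ≠ x)
        ↔ ¬ (∃ i : Fin (2 * c), g (b + ((i : ℕ) : ZMod (2 * c))) = x ∧
          o (b + ((i : ℕ) : ZMod (2 * c))) = false ∧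
          ∀ j : Fin (2 * c), j < i → g (b + ((j : ℕ) : ZMod (2 * c))) ≠ x)) := by
    intro x
    have hT2 : (univ.filter fun i : Fin (2 * c) =>
        g (b + ((i : ℕ) : ZMod (2 * c))) = x).card = 2 := by
      have h := card_filter_comp _ (phi_bij (c := c) b) (fun t => g t = x)
      simpa using h.trans (hD.1 x)
    have hT1 : (univ.filter fun i : Fin (2 * c) =>
        g (b + ((i : ℕ) : ZMod (2 * c))) = x ∧
        o (b + ((i : ℕ) : ZMod (2 * c))) = true).card = 1 := by
      have h := card_filter_comp _ (phi_bij (c := c) b) (fun t => g t = x ∧ o t = true)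
      simpa using h.trans (hD.2 x)
    obtain ⟨i₁, i₂, hlt, hTeq⟩ : ∃ i₁ i₂ : Fin (2 * c), i₁ < i₂ ∧
        (univ.filter fun i : Fin (2 * c) => g (b + ((i : ℕ) : ZMod (2 * c))) = x)
          = {i₁, i₂} := by
      obtain ⟨a₁, a₂, hne, hTeq⟩ := Finset.card_eq_two.mp hT2
      rcases hne.lt_or_gt with h | h
      · exact ⟨a₁, a₂, h, hTeq⟩
      · exact ⟨a₂, a₁, h, by rw [hTeq, Finset.pair_comm]⟩
    have hne : i₁ ≠ i₂ := ne_of_lt hlt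
    have hmem : ∀ i : Fin (2 * c),
        g (b + ((i : ℕ) : ZMod (2 * c))) = x ↔ i = i₁ ∨ i = i₂ := by
      intro i
      have := Finset.ext_iff.mp hTeq i
      simpa using this
    have hone : o (b + ((i₁ : ℕ) : ZMod (2 * c))) = true ↔
        o (b + ((i₂ : ℕ) : ZMod (2 * c))) = false := by
      have heq : (univ.filter fun i : Fin (2 * c) =>
          g (b + ((i : ℕ) : ZMod (2 * c))) = x ∧
          o (b + ((i : ℕ) : ZMod (2 * c))) = true)
          = ({i₁, i₂} : Finset (Fin (2 * c))).filter
              (fun i : Fin (2 * c) => o (b + ((i : ℕ) : ZMod (2 * c))) = true) := by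
        ext i
        simp only [Finset.mem_filter, Finset.mem_univ, true_and, Finset.mem_insert,
          Finset.mem_singleton, hmem i]
      rw [heq] at hT1
      cases h₁ : o (b + ((i₁ : ℕ) : ZMod (2 * c))) <;>
        cases h₂ : o (b + ((i₂ : ℕ) : ZMod (2 * c))) <;>
          simp_all [Finset.filter_insert, Finset.filter_singleton, hne]
    have hrev_eq : ∀ u v : Fin (2 * c), u.rev = v ↔ u = v.rev := by
      intro u v
      constructor <;> (rintro rfl; simp [Fin.rev_rev])
    have hP : (∃ i : Fin (2 * c), g (b + ((i : ℕ) : ZMod (2 * c))) = x ∧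
          o (b + ((i : ℕ) : ZMod (2 * c))) = false ∧
          ∀ j : Fin (2 * c), j < i → g (b + ((j : ℕ) : ZMod (2 * c))) ≠ x)
        ↔ o (b + ((i₁ : ℕ) : ZMod (2 * c))) = false :=
      firstvisit _ _ x i₁ i₂ hlt hmem
    have hmem' : ∀ i : Fin (2 * c),
        g (b + (((i.rev : Fin (2 * c)) : ℕ) : ZMod (2 * c))) = x ↔
          i = i₂.rev ∨ i = i₁.rev := by
      intro i
      rw [hmem i.rev, hrev_eq, hrev_eq, or_comm]
    have hQ : (∃ i : Fin (2 * c), g (-((1 - b) + ((i : ℕ) : ZMod (2 * c)))) = x ∧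
          o (-((1 - b) + ((i : ℕ) : ZMod (2 * c)))) = false ∧
          ∀ j : Fin (2 * c), j < i → g (-((1 - b) + ((j : ℕ) : ZMod (2 * c)))) ≠ x)
        ↔ o (b + ((i₂ : ℕ) : ZMod (2 * c))) = false := by
      simp only [rev_pos (c := c) b]
      rw [firstvisit (fun i : Fin (2 * c) => g (b + (((i.rev : Fin (2 * c)) : ℕ) : ZMod (2 * c))))
        (fun i : Fin (2 * c) => o (b + (((i.rev : Fin (2 * c)) : ℕ) : ZMod (2 * c))))
        x i₂.rev i₁.rev (by rwa [Fin.rev_lt_rev]) hmem']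
      simp [Fin.rev_rev]
    rw [hP, hQ]
    cases h₁ : o (b + ((i₁ : ℕ) : ZMod (2 * c))) <;>
      cases h₂ : o (b + ((i₂ : ℕ) : ZMod (2 * c))) <;> simp_all
  simp only [warpAt]
  have hfeq : (univ.filter fun x : Fin c =>
      (∃ i : Fin (2 * c), g (-((1 - b) + ((i : ℕ) : ZMod (2 * c)))) = x ∧
        o (-((1 - b) + ((i : ℕ) : ZMod (2 * c)))) = false ∧
        ∀ j : Fin (2 * c), j < i → g (-((1 - b) + ((j : ℕ) : ZMod (2 * c)))) ≠ x))
      = univ.filter fun x : Fin c =>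
        ¬ (∃ i : Fin (2 * c), g (b + ((i : ℕ) : ZMod (2 * c))) = x ∧
          o (b + ((i : ℕ) : ZMod (2 * c))) = false ∧
          ∀ j : Fin (2 * c), j < i → g (b + ((j : ℕ) : ZMod (2 * c))) ≠ x) := by
    ext x
    simp only [Finset.mem_filter, Finset.mem_univ, true_and]
    exact key x
  rw [hfeq, add_comm, Finset.card_filter_add_card_filter_not, Finset.card_univ,
    Fintype.card_fin]

end helpers

/-- For every diagram `D = (g, o)` with `c ≥ 1` crossings,
`d(-D) = c - max_b d(D_b)`; hence the unoriented warping degree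
`d̄(D) = min {d(D), d(-D)}` equals `min { min_b d(D_b), c - max_b d(D_b) }`. -/
theorem warp_reverse_eq_crossing_sub_sup (c : ℕ) [NeZero c] (hc : 1 ≤ c)
    (g : ZMod (2 * c) → Fin c) (o : ZMod (2 * c) → Bool) (hD : IsGaussDiagram c g o) :
    warp c (fun t => g (-t)) (fun t => o (-t)) = c - sSup (Set.range (warpAt c g o)) ∧
    min (warp c g o) (warp c (fun t => g (-t)) (fun t => o (-t)))
      = min (sInf (Set.range (warpAt c g o))) (c - sSup (Set.range (warpAt c g o))) := by
  classical
  have key : ∀ b' : ZMod (2 * c), warpAt c (fun t => g (-t)) (fun t => o (-t)) b'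
      = c - warpAt c g o (1 - b') := by
    intro b'
    have h := warpAt_add g o hD (1 - b')
    have h2 : (1 : ZMod (2 * c)) - (1 - b') = b' := by ring
    rw [h2] at h
    omega
  have hSne : (Set.range (warpAt c g o)).Nonempty := Set.range_nonempty _
  have hSfin : (Set.range (warpAt c g o)).Finite := Set.finite_range _
  have hsup_mem : sSup (Set.range (warpAt c g o)) ∈ Set.range (warpAt c g o) :=
    hSne.csSup_mem hSfin
  have hrange : Set.range (warpAt c (fun t => g (-t)) (fun t => o (-t)))
      = (fun v => c - v) '' Set.range (warpAt c g o) := by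
    ext v
    constructor
    · rintro ⟨b', rfl⟩
      exact ⟨warpAt c g o (1 - b'), ⟨_, rfl⟩, (key b').symm⟩
    · rintro ⟨w, ⟨b, rfl⟩, rfl⟩
      refine ⟨1 - b, ?_⟩
      rw [key (1 - b)]
      congr 1
      ring
  have h1 : warp c (fun t => g (-t)) (fun t => o (-t))
      = c - sSup (Set.range (warpAt c g o)) := by
    rw [warp, hrange]
    apply le_antisymm
    · exact Nat.sInf_le ⟨sSup (Set.range (warpAt c g o)), hsup_mem, rfl⟩
    · apply le_csInf (hSne.image _)
      rintro v ⟨w, hw, rfl⟩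
      have : w ≤ sSup (Set.range (warpAt c g o)) := le_csSup hSfin.bddAbove hw
      simpa using Nat.sub_le_sub_left this c
  exact ⟨h1, by rw [h1]; rfl⟩
end

section
/- (Lemma 3.5) Every diagram D in the Gauss-code model with c ≥ 1 crossings satisfies d̄(D) ≤ (c − 1)/2, i.e., 2·d̄(D) ≤ c − 1. -/
section Aux

variable {c : ℕ} [NeZero c]
set_option linter.unusedSectionVars false

/-- Generic first-visit lemma along a traversal `e` with inverse `ι`. -/
lemma first_iff_s2 (g : ZMod (2*c) → Fin c) (o : ZMod (2*c) → Bool)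
    (e : Fin (2*c) → ZMod (2*c)) (ι : ZMod (2*c) → Fin (2*c))
    (hei : ∀ i, ι (e i) = i) (hie : ∀ t, e (ι t) = t)
    (x : Fin c) (p q : ZMod (2*c)) (hpre : ∀ t, g t = x ↔ t = p ∨ t = q)
    (hlt : ι p < ι q) :
    (∃ i : Fin (2*c), g (e i) = x ∧ o (e i) = false ∧
        ∀ j : Fin (2*c), j < i → g (e j) ≠ x) ↔ o p = false := by
  constructor
  · rintro ⟨i, hgi, hoi, hmin⟩
    rcases (hpre _).1 hgi with h | h
    · rw [h] at hoi; exact hoi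
    · exfalso
      have hiq : i = ι q := by rw [← hei i, h]
      refine hmin (ι p) (hiq ▸ hlt) ?_
      rw [hie]; exact (hpre p).2 (Or.inl rfl)
  · intro hop
    refine ⟨ι p, by rw [hie]; exact (hpre p).2 (Or.inl rfl), by rw [hie]; exact hop, ?_⟩
    intro j hj hgj
    rcases (hpre _).1 hgj with h | h
    · have : j = ι p := by rw [← hei j, h]
      exact absurd (this ▸ hj) (lt_irrefl _)
    · have : j = ι q := by rw [← hei j, h]
      exact absurd (this ▸ hj) (not_lt_of_gt hlt)

/-- Extract the two preimages of a crossing, with exactly one overpass. -/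
lemma pre_pair {g : ZMod (2*c) → Fin c} {o : ZMod (2*c) → Bool}
    (hD : IsGaussDiagram c g o) (x : Fin c) :
    ∃ p q : ZMod (2*c), p ≠ q ∧ (∀ t, g t = x ↔ t = p ∨ t = q) ∧ o p = !o q := by
  obtain ⟨p, q, hpq, hset⟩ := Finset.card_eq_two.1 (hD.1 x)
  have hpre : ∀ t, g t = x ↔ t = p ∨ t = q := by
    intro t
    constructor
    · intro h
      have : t ∈ ({p, q} : Finset (ZMod (2*c))) := by
        rw [← hset]; simp [h]
      simpa using this
    · intro h
      have : t ∈ ({p, q} : Finset (ZMod (2*c))) := by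
        rcases h with h | h <;> simp [h]
      rw [← hset] at this; simpa using this
  obtain ⟨r, hr⟩ := Finset.card_eq_one.1 (hD.2 x)
  have hrmem : g r = x ∧ o r = true := by
    have : r ∈ Finset.univ.filter fun t => g t = x ∧ o t = true := by
      rw [hr]; simp
    simpa using this
  have honly : ∀ t, g t = x → o t = true → t = r := by
    intro t h1 h2
    have : t ∈ Finset.univ.filter fun t => g t = x ∧ o t = true := by simp [h1, h2]
    rw [hr] at this; simpa using this
  rcases (hpre r).1 hrmem.1 with h | h
  · refine ⟨p, q, hpq, hpre, ?_⟩
    have hop : o p = true := h ▸ hrmem.2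
    have hoq : o q ≠ true := fun hq => hpq ((honly q ((hpre q).2 (Or.inr rfl)) hq).trans h).symm
    simp [hop, Bool.eq_false_iff.2 hoq]
  · refine ⟨p, q, hpq, hpre, ?_⟩
    have hoq : o q = true := h ▸ hrmem.2
    have hop : o p ≠ true := fun hp => hpq ((honly p ((hpre p).2 (Or.inl rfl)) hp).trans h)
    simp [hoq, Bool.eq_false_iff.2 hop]

end Aux
/-- Lemma 3.5: every diagram `D` with `c ≥ 1` crossings satisfies
`d̄(D) ≤ (c - 1)/2`, i.e. `2 * d̄(D) ≤ c - 1`. -/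
theorem two_mul_unoriented_warp_le (c : ℕ) [NeZero c] (hc : 1 ≤ c)
    (g : ZMod (2 * c) → Fin c) (o : ZMod (2 * c) → Bool) (hD : IsGaussDiagram c g o) :
    2 * min (warp c g o) (warp c (fun t => g (-t)) (fun t => o (-t))) ≤ c - 1 := by
  classical
  -- choose a base point with `o b = true`
  obtain ⟨b, hb⟩ := Finset.card_eq_one.1 (hD.2 ⟨0, hc⟩)
  have hbmem : g b = (⟨0, hc⟩ : Fin c) ∧ o b = true := by
    have : b ∈ Finset.univ.filter fun t => g t = (⟨0, hc⟩ : Fin c) ∧ o t = true := by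
      rw [hb]; simp
    exact (Finset.mem_filter.1 this).2
  have hob : o b = true := hbmem.2
  -- traversal maps
  set ef : Fin (2*c) → ZMod (2*c) := fun i => b + ((i : ℕ) : ZMod (2*c)) with hef
  set er : Fin (2*c) → ZMod (2*c) := fun i => -(-b + ((i : ℕ) : ZMod (2*c))) with her
  set ιf : ZMod (2*c) → Fin (2*c) := fun t => ⟨(t - b).val, ZMod.val_lt _⟩ with hιf
  set ιr : ZMod (2*c) → Fin (2*c) := fun t => ⟨(b - t).val, ZMod.val_lt _⟩ with hιr
  have heif : ∀ i, ιf (ef i) = i := by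
    intro i
    apply Fin.ext
    simp only [hιf, hef, add_sub_cancel_left]
    exact ZMod.val_natCast_of_lt i.isLt
  have hief : ∀ t, ef (ιf t) = t := by
    intro t
    simp only [hιf, hef, ZMod.natCast_zmod_val, add_sub_cancel]
  have heir : ∀ i, ιr (er i) = i := by
    intro i
    apply Fin.ext
    simp only [hιr, her]
    have h : b - -(-b + ((i : ℕ) : ZMod (2*c))) = ((i : ℕ) : ZMod (2*c)) := by ring
    rw [h]
    exact ZMod.val_natCast_of_lt i.isLt
  have hier : ∀ t, er (ιr t) = t := by
    intro t
    simp only [hιr, her, ZMod.natCast_zmod_val]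
    ring
  -- the two counted predicates
  set P : Fin c → Prop := fun x => ∃ i : Fin (2*c), g (ef i) = x ∧ o (ef i) = false ∧
      ∀ j : Fin (2*c), j < i → g (ef j) ≠ x with hP
  set Q : Fin c → Prop := fun x => ∃ i : Fin (2*c), g (er i) = x ∧ o (er i) = false ∧
      ∀ j : Fin (2*c), j < i → g (er j) ≠ x with hQ
  have hwP : warpAt c g o b = (Finset.univ.filter P).card := rfl
  have hwQ : warpAt c (fun t => g (-t)) (fun t => o (-t)) (-b)
      = (Finset.univ.filter Q).card := rfl
  -- key dichotomy
  have key : ∀ x : Fin c, (P x ∨ Q x ↔ x ≠ g b) ∧ ¬(P x ∧ Q x) := by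
    intro x
    obtain ⟨p, q, hpq, hpre, hopq⟩ := pre_pair hD x
    have hvalne : (ιf p).val ≠ (ιf q).val := by
      intro h
      apply hpq
      simp only [hιf] at h
      have h2 : p - b = q - b := by
        have := congrArg (Nat.cast : ℕ → ZMod (2*c)) h
        rwa [ZMod.natCast_zmod_val, ZMod.natCast_zmod_val] at this
      exact sub_left_injective h2
    by_cases hx : g b = x
    · -- x = g b : counted in neither
      have hbm : b = p ∨ b = q := (hpre b).1 hx
      have hnotP : ¬ P x := by
        intro hPx
        rcases hbm with hbp | hbq
        · have := (first_iff_s2 g o ef ιf heif hief x b q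
              (fun t => by rw [hbp]; exact hpre t) ?_).1 hPx
          · rw [hob] at this; exact absurd this (by simp)
          · show (ιf b).val < (ιf q).val
            have h1 : (ιf b).val = 0 := by simp [hιf]
            have h2 : (ιf q).val ≠ 0 := by
              simp only [hιf]
              rw [Ne, ZMod.val_eq_zero, sub_eq_zero]
              exact fun h => hpq (hbp.symm.trans h.symm)
            omega
        · have := (first_iff_s2 g o ef ιf heif hief x b p
              (fun t => by rw [hbq]; exact (hpre t).trans or_comm) ?_).1 hPx
          · rw [hob] at this; exact absurd this (by simp)
          · show (ιf b).val < (ιf p).val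
            have h1 : (ιf b).val = 0 := by simp [hιf]
            have h2 : (ιf p).val ≠ 0 := by
              simp only [hιf]
              rw [Ne, ZMod.val_eq_zero, sub_eq_zero]
              exact fun h => hpq (h.trans hbq)
            omega
      have hnotQ : ¬ Q x := by
        intro hQx
        rcases hbm with hbp | hbq
        · have := (first_iff_s2 g o er ιr heir hier x b q
              (fun t => by rw [hbp]; exact hpre t) ?_).1 hQx
          · rw [hob] at this; exact absurd this (by simp)
          · show (ιr b).val < (ιr q).val
            have h1 : (ιr b).val = 0 := by simp [hιr]
            have h2 : (ιr q).val ≠ 0 := by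
              simp only [hιr]
              rw [Ne, ZMod.val_eq_zero, sub_eq_zero]
              exact fun h => hpq (hbp.symm.trans h)
            omega
        · have := (first_iff_s2 g o er ιr heir hier x b p
              (fun t => by rw [hbq]; exact (hpre t).trans or_comm) ?_).1 hQx
          · rw [hob] at this; exact absurd this (by simp)
          · show (ιr b).val < (ιr p).val
            have h1 : (ιr b).val = 0 := by simp [hιr]
            have h2 : (ιr p).val ≠ 0 := by
              simp only [hιr]
              rw [Ne, ZMod.val_eq_zero, sub_eq_zero]
              exact fun h => hpq (h.symm.trans hbq)
            omega
      refine ⟨⟨fun h => ?_, fun h => (h hx.symm).elim⟩, fun h => hnotP h.1⟩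
      rcases h with h | h
      · exact absurd h hnotP
      · exact absurd h hnotQ
    · -- x ≠ g b : counted in exactly one
      have hpb : p ≠ b := by
        rintro rfl; exact hx ((hpre p).2 (Or.inl rfl))
      have hqb : q ≠ b := by
        rintro rfl; exact hx ((hpre q).2 (Or.inr rfl))
      have main : ∀ p' q' : ZMod (2*c), p' ≠ b → q' ≠ b →
          (∀ t, g t = x ↔ t = p' ∨ t = q') → (ιf p').val < (ιf q').val →
          (P x ↔ o p' = false) ∧ (Q x ↔ o q' = false) := by
        intro p' q' hpb' hqb' hpre' hlt'
        constructor
        · exact first_iff_s2 g o ef ιf heif hief x p' q' hpre' hlt'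
        · refine first_iff_s2 g o er ιr heir hier x q' p'
            (fun t => (hpre' t).trans or_comm) ?_
          show (ιr q').val < (ιr p').val
          have e1 : (b - p') = -(p' - b) := by ring
          have e2 : (b - q') = -(q' - b) := by ring
          have hq0 : q' - b ≠ 0 := sub_ne_zero.2 hqb'
          have hp0' : p' - b ≠ 0 := sub_ne_zero.2 hpb'
          have v1 : (ιr p').val = 2*c - (p' - b).val := by
            simp only [hιr, e1, ZMod.neg_val, if_neg hp0']
          have v2 : (ιr q').val = 2*c - (q' - b).val := by
            simp only [hιr, e2, ZMod.neg_val, if_neg hq0]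
          have w1 : (ιf p').val = (p' - b).val := rfl
          have w2 : (ιf q').val = (q' - b).val := rfl
          have hub : (q' - b).val < 2*c := ZMod.val_lt _
          rw [w1, w2] at hlt'
          omega
      rcases Nat.lt_or_ge (ιf p).val (ιf q).val with hlt | hge
      · obtain ⟨h1, h2⟩ := main p q hpb hqb hpre hlt
        refine ⟨⟨fun _ h => hx h.symm, fun _ => ?_⟩, ?_⟩
        · rw [h1, h2]
          cases hq : o q with
          | false => exact Or.inr rfl
          | true => exact Or.inl (by simp [hopq, hq])
        · rintro ⟨hp1, hq1⟩
          rw [h1] at hp1; rw [h2] at hq1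
          rw [hp1, hq1] at hopq; simp at hopq
      · have hlt : (ιf q).val < (ιf p).val := by omega
        obtain ⟨h1, h2⟩ := main q p hqb hpb (fun t => (hpre t).trans or_comm) hlt
        refine ⟨⟨fun _ h => hx h.symm, fun _ => ?_⟩, ?_⟩
        · rw [h1, h2]
          cases hq : o q with
          | false => exact Or.inl rfl
          | true => exact Or.inr (by simp [hopq, hq])
        · rintro ⟨hp1, hq1⟩
          rw [h1] at hp1; rw [h2] at hq1
          rw [hq1, hp1] at hopq; simp at hopq
  -- counting
  have hdisj : Disjoint (Finset.univ.filter P) (Finset.univ.filter Q) := by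
    rw [Finset.disjoint_left]
    intro x hx1 hx2
    simp only [Finset.mem_filter] at hx1 hx2
    exact (key x).2 ⟨hx1.2, hx2.2⟩
  have hunion : Finset.univ.filter P ∪ Finset.univ.filter Q
      = Finset.univ.filter (fun x => x ≠ g b) := by
    ext x
    simp only [Finset.mem_union, Finset.mem_filter, Finset.mem_univ, true_and]
    exact (key x).1
  have hcards : (Finset.univ.filter P).card + (Finset.univ.filter Q).card = c - 1 := by
    rw [← Finset.card_union_of_disjoint hdisj, hunion, Finset.filter_ne',
      Finset.card_erase_of_mem (Finset.mem_univ _), Finset.card_univ, Fintype.card_fin]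
  have hle1 : warp c g o ≤ warpAt c g o b := Nat.sInf_le ⟨b, rfl⟩
  have hle2 : warp c (fun t => g (-t)) (fun t => o (-t))
      ≤ warpAt c (fun t => g (-t)) (fun t => o (-t)) (-b) := Nat.sInf_le ⟨-b, rfl⟩
  have hm1 := min_le_left (warp c g o) (warp c (fun t => g (-t)) (fun t => o (-t)))
  have hm2 := min_le_right (warp c g o) (warp c (fun t => g (-t)) (fun t => o (-t)))
  rw [hwP] at hle1; rw [hwQ] at hle2
  omega
end

section
/- (Proposition 3.2) Let D = (g, o) be an alternating diagram in the Gauss-code model with c ≥ 2 crossings, and let D' be the almost alternating diagram obtained from D by a crossing change at a single crossing x, i.e., by negating o at the two preimages of x under g. Then d̄(D') ≤ d̄(D). If moreover the diagram has no monogons, i.e., g(t+1) ≠ g(t) for every t ∈ ZMod (2c), then d̄(D') = d̄(D) − 1. -/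
namespace Prop32Aux

set_option linter.unusedSectionVars false

variable {c : ℕ} [NeZero c]

lemma two_c_pos (c : ℕ) [NeZero c] : 0 < 2 * c := by
  have := NeZero.ne c; omega

instance : NeZero (2 * c) := ⟨by have := NeZero.ne c; omega⟩

lemma cast_val (a : ZMod (2 * c)) : ((a.val : ℕ) : ZMod (2 * c)) = a :=
  ZMod.natCast_rightInverse a

lemma val_pos {a : ZMod (2 * c)} (ha : a ≠ 0) : 0 < a.val := by
  rcases Nat.eq_zero_or_pos a.val with h | h
  · exact absurd ((ZMod.val_eq_zero a).1 h) ha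
  · exact h

lemma val_inj {a b : ZMod (2 * c)} (h : a.val = b.val) : a = b := by
  rw [← cast_val a, ← cast_val b, h]

lemma sub_one_val {a : ZMod (2 * c)} (ha : a ≠ 0) : (a - 1).val = a.val - 1 := by
  have h1 : 1 ≤ a.val := val_pos ha
  have h2 : a.val < 2 * c := ZMod.val_lt a
  have : a - 1 = ((a.val - 1 : ℕ) : ZMod (2 * c)) := by
    have : ((a.val - 1 : ℕ) : ZMod (2 * c)) = ((a.val : ℕ) : ZMod (2 * c)) - 1 := by
      push_cast [h1]; ring
    rw [this, cast_val]
  rw [this, ZMod.val_cast_of_lt (by omega)]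

lemma neg_one_val : (-1 : ZMod (2 * c)).val = 2 * c - 1 := by
  have h1 : 1 ≤ 2 * c := two_c_pos c
  have : (-1 : ZMod (2 * c)) = ((2 * c - 1 : ℕ) : ZMod (2 * c)) := by
    rw [Nat.cast_sub h1, ZMod.natCast_self]
    simp
  rw [this, ZMod.val_cast_of_lt (by omega)]

lemma val_one : (1 : ZMod (2 * c)).val = 1 := by
  have h1 : 1 < 2 * c := by have := NeZero.ne c; omega
  have : (1 : ZMod (2 * c)) = ((1 : ℕ) : ZMod (2 * c)) := by push_cast; rfl
  rw [this, ZMod.val_cast_of_lt h1]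

lemma ne_neg_one_val_lt {a : ZMod (2 * c)} (ha : a ≠ -1) : a.val < 2 * c - 1 := by
  have h2 : a.val < 2 * c := ZMod.val_lt a
  rcases lt_or_ge a.val (2 * c - 1) with h | h
  · exact h
  · exfalso; apply ha; apply val_inj; rw [neg_one_val]; omega


def goodPair (g : ZMod (2 * c) → Fin c) (o : ZMod (2 * c) → Bool)
    (ov un : Fin c → ZMod (2 * c)) : Prop :=
  (∀ (t : ZMod (2 * c)) (x : Fin c), g t = x ↔ t = ov x ∨ t = un x) ∧
  (∀ x, o (ov x) = true) ∧ (∀ x, o (un x) = false)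

variable {g : ZMod (2 * c) → Fin c} {o : ZMod (2 * c) → Bool}
  {ov un : Fin c → ZMod (2 * c)}

lemma goodPair.ov_ne_un (hp : goodPair g o ov un) (x : Fin c) : ov x ≠ un x := by
  intro h
  have h1 := hp.2.1 x
  have h2 := hp.2.2 x
  rw [h] at h1; rw [h1] at h2; exact Bool.noConfusion h2

lemma goodPair.g_ov (hp : goodPair g o ov un) (x : Fin c) : g (ov x) = x :=
  (hp.1 _ _).2 (Or.inl rfl)

lemma goodPair.g_un (hp : goodPair g o ov un) (x : Fin c) : g (un x) = x :=
  (hp.1 _ _).2 (Or.inr rfl)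

lemma warpAt_eq (hp : goodPair g o ov un) (b : ZMod (2 * c)) :
    warpAt c g o b
      = (Finset.univ.filter fun x : Fin c => (un x - b).val < (ov x - b).val).card := by
  unfold warpAt
  congr 1
  apply Finset.filter_congr
  intro x _
  constructor
  · rintro ⟨i, hgi, hoi, hmin⟩
    have hbi : b + ((i : ℕ) : ZMod (2 * c)) = un x := by
      rcases (hp.1 _ x).1 hgi with h | h
      · exfalso; rw [h, hp.2.1 x] at hoi; exact Bool.noConfusion hoi
      · exact h
    have hival : (i : ℕ) = (un x - b).val := by
      have : ((i : ℕ) : ZMod (2 * c)) = un x - b := by rw [← hbi]; ring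
      rw [← ZMod.val_cast_of_lt i.isLt, this]
    set j : Fin (2 * c) := ⟨(ov x - b).val, ZMod.val_lt _⟩ with hj
    have hgj : g (b + ((j : ℕ) : ZMod (2 * c))) = x := by
      show g (b + (((ov x - b).val : ℕ) : ZMod (2 * c))) = x
      rw [cast_val]
      have : b + (ov x - b) = ov x := by ring
      rw [this]; exact hp.g_ov x
    have hnlt : ¬ j < i := fun hlt => hmin j hlt hgj
    have : (un x - b).val ≤ (ov x - b).val := by
      rw [← hival]
      exact le_of_not_gt (fun h => hnlt (by exact h))
    rcases lt_or_eq_of_le this with h | h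
    · exact h
    · exfalso
      have : un x - b = ov x - b := val_inj h
      exact (hp.ov_ne_un x) (sub_left_inj.mp this).symm
  · intro h
    refine ⟨⟨(un x - b).val, ZMod.val_lt _⟩, ?_, ?_, ?_⟩
    · show g (b + (((un x - b).val : ℕ) : ZMod (2 * c))) = x
      rw [cast_val]
      have : b + (un x - b) = un x := by ring
      rw [this]; exact hp.g_un x
    · show o (b + (((un x - b).val : ℕ) : ZMod (2 * c))) = false
      rw [cast_val]
      have : b + (un x - b) = un x := by ring
      rw [this]; exact hp.2.2 x
    · intro j hlt hgj
      rcases (hp.1 _ x).1 hgj with hh | hh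
      · have : (j : ℕ) = (ov x - b).val := by
          have : ((j : ℕ) : ZMod (2 * c)) = ov x - b := by
            have := hh; rw [← this]; ring
          rw [← ZMod.val_cast_of_lt j.isLt, this]
        have hji : (j : ℕ) < (un x - b).val := hlt
        omega
      · have : (j : ℕ) = (un x - b).val := by
          have : ((j : ℕ) : ZMod (2 * c)) = un x - b := by
            have := hh; rw [← this]; ring
          rw [← ZMod.val_cast_of_lt j.isLt, this]
        have hji : (j : ℕ) < (un x - b).val := hlt
        omega


lemma sub_succ_val {t b : ZMod (2 * c)} (ht : t ≠ b) :
    (t - (b + 1)).val = (t - b).val - 1 ∧ 1 ≤ (t - b).val := by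
  have h0 : t - b ≠ 0 := sub_ne_zero.mpr ht
  have h1 : t - (b + 1) = (t - b) - 1 := by ring
  exact ⟨by rw [h1, sub_one_val h0], val_pos h0⟩

lemma shift_mem_iff (hp : goodPair g o ov un) {b : ZMod (2 * c)} {y : Fin c}
    (hov : ov y ≠ b) (hun : un y ≠ b) :
    ((un y - (b + 1)).val < (ov y - (b + 1)).val ↔ (un y - b).val < (ov y - b).val) := by
  obtain ⟨e1, p1⟩ := sub_succ_val hun
  obtain ⟨e2, p2⟩ := sub_succ_val hov
  rw [e1, e2]; omega

lemma b_eq_ov (hp : goodPair g o ov un) {b : ZMod (2 * c)} (hob : o b = true) :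
    b = ov (g b) := by
  rcases (hp.1 b (g b)).1 rfl with h | h
  · exact h
  · exfalso; rw [h, hp.2.2] at hob; exact Bool.noConfusion hob

lemma b_eq_un (hp : goodPair g o ov un) {b : ZMod (2 * c)} (hob : o b = false) :
    b = un (g b) := by
  rcases (hp.1 b (g b)).1 rfl with h | h
  · exfalso; rw [h, hp.2.1] at hob; exact Bool.noConfusion hob
  · exact h

lemma ov_ne_of_ne (hp : goodPair g o ov un) {b : ZMod (2 * c)} {y : Fin c}
    (hy : y ≠ g b) : ov y ≠ b ∧ un y ≠ b := by
  constructor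
  · intro h; apply hy; rw [← h, hp.g_ov]
  · intro h; apply hy; rw [← h, hp.g_un]

lemma step_true (hp : goodPair g o ov un) {b : ZMod (2 * c)} (hob : o b = true) :
    warpAt c g o (b + 1) = warpAt c g o b + 1 := by
  rw [warpAt_eq hp, warpAt_eq hp]
  have hbov : b = ov (g b) := b_eq_ov hp hob
  have hunb : un (g b) ≠ b := by
    intro h; apply hp.ov_ne_un (g b); rw [← hbov]; exact h.symm
  have hmem : g b ∉ (Finset.univ.filter fun x : Fin c => (un x - b).val < (ov x - b).val) := by
    simp only [Finset.mem_filter, Finset.mem_univ, true_and, not_lt]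
    rw [← hbov, sub_self, ZMod.val_zero]; omega
  have hset : (Finset.univ.filter fun x : Fin c => (un x - (b + 1)).val < (ov x - (b + 1)).val)
      = insert (g b) (Finset.univ.filter fun x : Fin c => (un x - b).val < (ov x - b).val) := by
    ext y
    simp only [Finset.mem_filter, Finset.mem_univ, true_and, Finset.mem_insert]
    by_cases hy : y = g b
    · subst hy
      simp only [true_or, iff_true]
      have h1 : ov (g b) - (b + 1) = -1 := by rw [← hbov]; ring
      have h2 : un (g b) - (b + 1) ≠ -1 := by
        intro h
        have h3 : un (g b) - (b + 1) = ov (g b) - (b + 1) := by rw [h, h1]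
        exact hp.ov_ne_un (g b) (sub_left_inj.mp h3).symm
      rw [h1, neg_one_val]
      exact ne_neg_one_val_lt h2
    · obtain ⟨h1, h2⟩ := ov_ne_of_ne hp hy
      rw [shift_mem_iff hp h1 h2]
      simp [hy]
  rw [hset, Finset.card_insert_of_notMem hmem]

lemma step_false (hp : goodPair g o ov un) {b : ZMod (2 * c)} (hob : o b = false) :
    warpAt c g o b = warpAt c g o (b + 1) + 1 := by
  rw [warpAt_eq hp, warpAt_eq hp]
  have hbun : b = un (g b) := b_eq_un hp hob
  have hovb : ov (g b) ≠ b := by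
    intro h; apply hp.ov_ne_un (g b); rw [← hbun]; exact h
  have hmem : g b ∉ (Finset.univ.filter fun x : Fin c =>
      (un x - (b + 1)).val < (ov x - (b + 1)).val) := by
    simp only [Finset.mem_filter, Finset.mem_univ, true_and, not_lt]
    have h1 : un (g b) - (b + 1) = -1 := by rw [← hbun]; ring
    rw [h1, neg_one_val]
    have := ZMod.val_lt (ov (g b) - (b + 1))
    omega
  have hset : (Finset.univ.filter fun x : Fin c => (un x - b).val < (ov x - b).val)
      = insert (g b) (Finset.univ.filter fun x : Fin c =>
          (un x - (b + 1)).val < (ov x - (b + 1)).val) := by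
    ext y
    simp only [Finset.mem_filter, Finset.mem_univ, true_and, Finset.mem_insert]
    by_cases hy : y = g b
    · subst hy
      simp only [true_or, iff_true]
      rw [← hbun, sub_self, ZMod.val_zero]
      exact val_pos (sub_ne_zero.mpr hovb)
    · obtain ⟨h1, h2⟩ := ov_ne_of_ne hp hy
      rw [← shift_mem_iff hp h1 h2]
      simp [hy]
  rw [hset, Finset.card_insert_of_notMem hmem]


lemma bool_succ (halt : ∀ t : ZMod (2 * c), o (t + 1) ≠ o t) (t : ZMod (2 * c)) :
    o (t + 1) = !o t := by
  have := halt t; revert this; cases o (t + 1) <;> cases o t <;> simp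

lemma warpAt_period (hp : goodPair g o ov un)
    (halt : ∀ t : ZMod (2 * c), o (t + 1) ≠ o t) (b : ZMod (2 * c)) :
    warpAt c g o (b + 2) = warpAt c g o b := by
  have e : b + 1 + 1 = b + 2 := by ring
  have hsucc := bool_succ halt b
  cases hob : o b
  · rw [hob] at hsucc
    have h1 := step_false hp hob
    have h2 := step_true hp (b := b + 1) (by simp [hsucc])
    rw [e] at h2; omega
  · rw [hob] at hsucc
    have h1 := step_true hp hob
    have h2 := step_false hp (b := b + 1) (by simp [hsucc])
    rw [e] at h2; omega

lemma warpAt_add_even (hp : goodPair g o ov un)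
    (halt : ∀ t : ZMod (2 * c), o (t + 1) ≠ o t) (b : ZMod (2 * c)) :
    ∀ k : ℕ, warpAt c g o (b + ((2 * k : ℕ) : ZMod (2 * c))) = warpAt c g o b := by
  intro k
  induction k with
  | zero => simp
  | succ k ih =>
    have e : b + ((2 * (k + 1) : ℕ) : ZMod (2 * c))
        = (b + ((2 * k : ℕ) : ZMod (2 * c))) + 2 := by push_cast; ring
    rw [e, warpAt_period hp halt, ih]

lemma o_parity (halt : ∀ t : ZMod (2 * c), o (t + 1) ≠ o t) :
    ∀ (k : ℕ) (t : ZMod (2 * c)),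
      o (t + (k : ZMod (2 * c))) = if k % 2 = 0 then o t else !o t := by
  intro k
  induction k with
  | zero => simp
  | succ k ih =>
    intro t
    have e : t + ((k + 1 : ℕ) : ZMod (2 * c)) = (t + (k : ZMod (2 * c))) + 1 := by
      push_cast; ring
    rw [e, bool_succ halt, ih]
    rcases Nat.even_or_odd k with h | h
    · have h1 : k % 2 = 0 := Nat.even_iff.mp h
      have h2 : (k + 1) % 2 = 1 := by omega
      simp [h1, h2]
    · have h1 : k % 2 = 1 := Nat.odd_iff.mp h
      have h2 : (k + 1) % 2 = 0 := by omega
      simp [h1, h2]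


lemma warpAt_const (hp : goodPair g o ov un)
    (halt : ∀ t : ZMod (2 * c), o (t + 1) ≠ o t) {b b' : ZMod (2 * c)}
    (h : o b = o b') : warpAt c g o b = warpAt c g o b' := by
  set k := (b' - b).val with hk
  have hb' : b' = b + ((k : ℕ) : ZMod (2 * c)) := by rw [hk, cast_val]; ring
  have hke : k % 2 = 0 := by
    by_contra hko
    have h2 := o_parity halt k b
    rw [← hb'] at h2
    rw [if_neg hko, ← h] at h2
    revert h2; cases o b <;> simp
  obtain ⟨m, hm⟩ : ∃ m, k = 2 * m := ⟨k / 2, by omega⟩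
  rw [hb', hm]
  exact (warpAt_add_even hp halt b m).symm

/-- value of warpAt depending on the over/under status at the base point -/
lemma warpAt_value (hp : goodPair g o ov un)
    (halt : ∀ t : ZMod (2 * c), o (t + 1) ≠ o t) (x : Fin c) (b : ZMod (2 * c)) :
    warpAt c g o b = if o b = true then warpAt c g o (ov x)
      else warpAt c g o (ov x) + 1 := by
  cases hob : o b
  · rw [if_neg Bool.false_ne_true]
    have h1 := step_false hp hob
    have h2 : o (b + 1) = true := by rw [bool_succ halt, hob]; rfl
    have h3 : warpAt c g o (b + 1) = warpAt c g o (ov x) :=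
      warpAt_const hp halt (by rw [h2, hp.2.1 x])
    omega
  · simp only [if_pos rfl]
    exact warpAt_const hp halt (by rw [hob, hp.2.1 x])

lemma warp_eq (hp : goodPair g o ov un)
    (halt : ∀ t : ZMod (2 * c), o (t + 1) ≠ o t) (x : Fin c) :
    warp c g o = warpAt c g o (ov x) := by
  apply le_antisymm
  · exact Nat.sInf_le (Set.mem_range_self (ov x))
  · apply le_csInf ⟨warpAt c g o (ov x), Set.mem_range_self (ov x)⟩
    rintro y ⟨b, rfl⟩
    rw [warpAt_value hp halt x b]
    split <;> omega


lemma goodPair_cc (hp : goodPair g o ov un) (x : Fin c) {o' : ZMod (2 * c) → Bool}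
    (ho' : o' = fun t => if g t = x then !(o t) else o t) :
    goodPair g o' (fun y => if y = x then un y else ov y)
      (fun y => if y = x then ov y else un y) := by
  refine ⟨fun t y => ?_, fun y => ?_, fun y => ?_⟩
  · rw [hp.1 t y]
    by_cases hy : y = x <;> simp [hy] <;> tauto
  · by_cases hy : y = x
    · subst hy
      show o' (if y = y then un y else ov y) = true
      rw [if_pos rfl, ho']
      show (if g (un y) = y then !o (un y) else o (un y)) = true
      rw [if_pos (hp.g_un y), hp.2.2 y]; rfl
    · show o' (if y = x then un y else ov y) = true
      rw [if_neg hy, ho']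
      show (if g (ov y) = x then !o (ov y) else o (ov y)) = true
      rw [if_neg (by rw [hp.g_ov]; exact hy), hp.2.1 y]
  · by_cases hy : y = x
    · subst hy
      show o' (if y = y then ov y else un y) = false
      rw [if_pos rfl, ho']
      show (if g (ov y) = y then !o (ov y) else o (ov y)) = false
      rw [if_pos (hp.g_ov y), hp.2.1 y]; rfl
    · show o' (if y = x then ov y else un y) = false
      rw [if_neg hy, ho']
      show (if g (un y) = x then !o (un y) else o (un y)) = false
      rw [if_neg (by rw [hp.g_un]; exact hy), hp.2.2 y]

lemma warpAt_cc (hp : goodPair g o ov un) (x : Fin c) {o' : ZMod (2 * c) → Bool}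
    (ho' : o' = fun t => if g t = x then !(o t) else o t) (b : ZMod (2 * c)) :
    if (un x - b).val < (ov x - b).val
    then warpAt c g o' b + 1 = warpAt c g o b
    else warpAt c g o' b = warpAt c g o b + 1 := by
  have hp' := goodPair_cc hp x ho'
  rw [warpAt_eq hp' b, warpAt_eq hp b]
  have hsetne : un x - b ≠ ov x - b :=
    fun h => hp.ov_ne_un x (sub_left_inj.mp h).symm
  have hvne : (un x - b).val ≠ (ov x - b).val := fun h => hsetne (val_inj h)
  split
  · next hχ =>
    have hmem : x ∈ Finset.univ.filter
        (fun y : Fin c => (un y - b).val < (ov y - b).val) := by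
      simp only [Finset.mem_filter, Finset.mem_univ, true_and]; exact hχ
    have hset : (Finset.univ.filter fun y : Fin c =>
        (((if y = x then ov y else un y) : ZMod (2 * c)) - b).val
          < (((if y = x then un y else ov y) : ZMod (2 * c)) - b).val)
        = (Finset.univ.filter fun y : Fin c =>
            (un y - b).val < (ov y - b).val).erase x := by
      ext y
      simp only [Finset.mem_filter, Finset.mem_univ, true_and, Finset.mem_erase]
      by_cases hy : y = x
      · subst hy; simp only [if_pos rfl, if_true]
        constructor
        · intro h; omega
        · rintro ⟨h, -⟩; exact absurd rfl h
      · simp only [if_neg hy]; tauto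
    rw [hset, ← Finset.card_erase_add_one hmem]
  · next hχ =>
    have hmem : x ∉ Finset.univ.filter
        (fun y : Fin c => (un y - b).val < (ov y - b).val) := by
      simp only [Finset.mem_filter, Finset.mem_univ, true_and]; exact hχ
    have hset : (Finset.univ.filter fun y : Fin c =>
        (((if y = x then ov y else un y) : ZMod (2 * c)) - b).val
          < (((if y = x then un y else ov y) : ZMod (2 * c)) - b).val)
        = insert x (Finset.univ.filter fun y : Fin c =>
            (un y - b).val < (ov y - b).val) := by
      ext y
      simp only [Finset.mem_filter, Finset.mem_univ, true_and, Finset.mem_insert]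
      by_cases hy : y = x
      · subst hy; simp only [if_pos rfl, if_true, true_or, iff_true]; omega
      · simp only [if_neg hy]; tauto
    rw [hset, Finset.card_insert_of_notMem hmem]

lemma main (hp : goodPair g o ov un)
    (halt : ∀ t : ZMod (2 * c), o (t + 1) ≠ o t) (x : Fin c)
    {o' : ZMod (2 * c) → Bool}
    (ho' : o' = fun t => if g t = x then !(o t) else o t) :
    warp c g o' ≤ warp c g o ∧
      ((∀ t : ZMod (2 * c), g (t + 1) ≠ g t) → warp c g o' + 1 = warp c g o) := by
  have hw' : warp c g o' = sInf (Set.range (warpAt c g o')) := rfl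
  set v := warpAt c g o (ov x) with hv
  have hwv : warp c g o = v := warp_eq hp halt x
  have hlow : ∀ b, v ≤ warpAt c g o b := by
    intro b
    rw [warpAt_value hp halt x b]
    split <;> omega
  have hovun : ov x ≠ un x := hp.ov_ne_un x
  -- value at un x
  have hval_un : warpAt c g o (un x) = v + 1 := by
    rw [warpAt_value hp halt x (un x), if_neg (by rw [hp.2.2 x]; exact Bool.false_ne_true)]
  have hχun : (un x - un x).val < (ov x - un x).val := by
    rw [sub_self, ZMod.val_zero]
    exact val_pos (sub_ne_zero.mpr hovun)
  have hcc_un := warpAt_cc hp x ho' (un x)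
  rw [if_pos hχun, hval_un] at hcc_un
  have h1 : warp c g o' ≤ v := by
    have := Nat.sInf_le (Set.mem_range_self (f := warpAt c g o') (un x))
    omega
  refine ⟨by omega, fun hmono => ?_⟩
  -- base point just before un x
  set b₀ := un x - 1 with hb₀
  have hb₁ : b₀ + 1 = un x := by rw [hb₀]; ring
  have hob₀ : o b₀ = true := by
    have := bool_succ halt b₀
    rw [hb₁, hp.2.2 x] at this
    revert this; cases o b₀ <;> simp
  have hval_b₀ : warpAt c g o b₀ = v := by
    rw [warpAt_value hp halt x b₀, if_pos hob₀]
  have hd1 : un x - b₀ = 1 := by rw [hb₀]; ring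
  have ha0 : ov x - b₀ ≠ 0 := by
    intro h
    have h1 : ov x = b₀ := sub_eq_zero.mp h
    apply hmono (ov x)
    have h2 : ov x + 1 = un x := by rw [h1, hb₁]
    rw [h2, hp.g_un, hp.g_ov]
  have ha1 : ov x - b₀ ≠ 1 := by
    intro h
    apply hovun
    have h3 : ov x - b₀ = un x - b₀ := by rw [h, hd1]
    exact sub_left_inj.mp h3
  have hχb₀ : (un x - b₀).val < (ov x - b₀).val := by
    rw [hd1, val_one]
    have hv0 : (ov x - b₀).val ≠ 0 := fun h => ha0 ((ZMod.val_eq_zero _).mp h)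
    have hv1 : (ov x - b₀).val ≠ 1 := by
      intro h
      apply ha1; apply val_inj; rw [h, val_one]
    omega
  have hcc₀ := warpAt_cc hp x ho' b₀
  rw [if_pos hχb₀, hval_b₀] at hcc₀
  rw [hwv]
  apply le_antisymm
  · have := Nat.sInf_le (Set.mem_range_self (f := warpAt c g o') b₀)
    omega
  · obtain ⟨b₁, hb₁'⟩ : warp c g o' ∈ Set.range (warpAt c g o') :=
      Nat.sInf_mem ⟨warpAt c g o' 0, Set.mem_range_self 0⟩
    have hcc₁ := warpAt_cc hp x ho' b₁
    have hl₁ := hlow b₁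
    split at hcc₁ <;> omega


lemma exists_goodPair (hD : IsGaussDiagram c g o) : ∃ ov un, goodPair g o ov un := by
  classical
  have hfalse : ∀ x : Fin c,
      (Finset.univ.filter fun t => g t = x ∧ o t = false).card = 1 := by
    intro x
    have hsub : (Finset.univ.filter fun t => g t = x ∧ o t = true)
        ⊆ (Finset.univ.filter fun t => g t = x) := by
      intro t ht
      simp only [Finset.mem_filter, Finset.mem_univ, true_and] at ht ⊢
      exact ht.1
    have hdiff : (Finset.univ.filter fun t => g t = x ∧ o t = false)
        = (Finset.univ.filter fun t => g t = x)
          \ (Finset.univ.filter fun t => g t = x ∧ o t = true) := by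
      ext t
      simp only [Finset.mem_filter, Finset.mem_sdiff, Finset.mem_univ, true_and]
      cases ht : o t <;> simp [ht]
    rw [hdiff, Finset.card_sdiff_of_subset hsub, hD.1 x, hD.2 x]
  choose ovs hovs using fun x => Finset.card_eq_one.mp (hD.2 x)
  choose uns huns using fun x => Finset.card_eq_one.mp (hfalse x)
  have hov_mem : ∀ x, g (ovs x) = x ∧ o (ovs x) = true := by
    intro x
    have h : ovs x ∈ Finset.univ.filter (fun t => g t = x ∧ o t = true) := by
      rw [hovs x]; exact Finset.mem_singleton_self _
    simpa using h
  have hun_mem : ∀ x, g (uns x) = x ∧ o (uns x) = false := by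
    intro x
    have h : uns x ∈ Finset.univ.filter (fun t => g t = x ∧ o t = false) := by
      rw [huns x]; exact Finset.mem_singleton_self _
    simpa using h
  refine ⟨ovs, uns, fun t x => ?_, fun x => (hov_mem x).2, fun x => (hun_mem x).2⟩
  constructor
  · intro hg
    cases hot : o t
    · right
      have h : t ∈ Finset.univ.filter (fun s => g s = x ∧ o s = false) := by
        simp [hg, hot]
      rw [huns x] at h; simpa using h
    · left
      have h : t ∈ Finset.univ.filter (fun s => g s = x ∧ o s = true) := by
        simp [hg, hot]
      rw [hovs x] at h; simpa using h
  · rintro (rfl | rfl)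
    · exact (hov_mem x).1
    · exact (hun_mem x).1

lemma goodPair_rev (hp : goodPair g o ov un) :
    goodPair (fun t => g (-t)) (fun t => o (-t))
      (fun y => -(ov y)) (fun y => -(un y)) := by
  refine ⟨fun t y => ?_, fun y => ?_, fun y => ?_⟩
  · show g (-t) = y ↔ _
    rw [hp.1 (-t) y, neg_eq_iff_eq_neg, neg_eq_iff_eq_neg]
  · show o (-(-(ov y))) = true
    rw [neg_neg]; exact hp.2.1 y
  · show o (-(-(un y))) = false
    rw [neg_neg]; exact hp.2.2 y

end Prop32Aux

/-- Proposition 3.2: let `D = (g, o)` be an alternating diagram with `c ≥ 2` crossings and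
let `D'` be the almost alternating diagram obtained from `D` by a crossing change at the
crossing `x` (negating `o` at the two preimages of `x` under `g`). Then `d̄(D') ≤ d̄(D)`;
if moreover the diagram has no monogons (`g (t+1) ≠ g t` for all `t`), then
`d̄(D') = d̄(D) - 1`. -/
theorem unoriented_warp_crossing_change (c : ℕ) [NeZero c] (hc : 2 ≤ c)
    (g : ZMod (2 * c) → Fin c) (o : ZMod (2 * c) → Bool) (hD : IsGaussDiagram c g o)
    (halt : ∀ t : ZMod (2 * c), o (t + 1) ≠ o t) (x : Fin c)
    (o' : ZMod (2 * c) → Bool) (ho' : o' = fun t => if g t = x then !(o t) else o t) :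
    min (warp c g o') (warp c (fun t => g (-t)) (fun t => o' (-t)))
      ≤ min (warp c g o) (warp c (fun t => g (-t)) (fun t => o (-t))) ∧
    ((∀ t : ZMod (2 * c), g (t + 1) ≠ g t) →
      min (warp c g o') (warp c (fun t => g (-t)) (fun t => o' (-t))) + 1
        = min (warp c g o) (warp c (fun t => g (-t)) (fun t => o (-t)))) := by
  obtain ⟨ov, un, hp⟩ := Prop32Aux.exists_goodPair hD
  have hpr := Prop32Aux.goodPair_rev hp
  have haltr : ∀ t : ZMod (2 * c),
      (fun t => o (-t)) (t + 1) ≠ (fun t => o (-t)) t := by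
    intro t
    show o (-(t + 1)) ≠ o (-t)
    have h := halt (-(t + 1))
    have e : -(t + 1) + 1 = -t := by ring
    rw [e] at h
    exact fun hh => h hh.symm
  have ho'r : (fun t : ZMod (2 * c) => o' (-t))
      = fun t => if (fun t => g (-t)) t = x
          then !((fun t => o (-t)) t) else (fun t => o (-t)) t := by
    funext t
    show o' (-t) = _
    rw [ho']
  have m1 := Prop32Aux.main hp halt x ho'
  have m2 := Prop32Aux.main hpr haltr x ho'r
  refine ⟨min_le_min m1.1 m2.1, fun hmono => ?_⟩
  have hmonor : ∀ t : ZMod (2 * c),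
      (fun t => g (-t)) (t + 1) ≠ (fun t => g (-t)) t := by
    intro t
    show g (-(t + 1)) ≠ g (-t)
    have h := hmono (-(t + 1))
    have e : -(t + 1) + 1 = -t := by ring
    rw [e] at h
    exact fun hh => h hh.symm
  have e1 := m1.2 hmono
  have e2 := m2.2 hmonor
  rw [← e1, ← e2, min_add_add_right]
end

section
/- For every n ≥ 3 and every k with 1 ≤ k ≤ n − 1, the number N of k-element subsets S of ZMod n such that no two elements of S are cyclically adjacent (i.e., there is no i ∈ ZMod n with both i ∈ S and i + 1 ∈ S) satisfies (n − k) · N = n · C(n − k, k); equivalently N = C(n − k, k) · n/(n − k). In particular N = 0 when k > ⌊n/2⌋. -/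
open Finset

def pathCount (m k : ℕ) : ℕ :=
  (((Finset.range m).powersetCard k).filter fun S => ∀ i ∈ S, i + 1 ∉ S).card

lemma pathCount_recur (m k : ℕ) :
    pathCount (m + 2) (k + 1) = pathCount (m + 1) (k + 1) + pathCount m k := by
  classical
  set A := ((Finset.range (m+2)).powersetCard (k+1)).filter fun S => ∀ i ∈ S, i + 1 ∉ S with hA
  have hsplit := Finset.card_filter_add_card_filter_not
    (s := A) (p := fun S => (m+1) ∈ S)
  have hA2 : pathCount (m + 2) (k + 1) = A.card := rfl
  have h1 : (A.filter fun S => ¬ (m+1) ∈ S).card = pathCount (m+1) (k+1) := by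
    unfold pathCount
    congr 1
    ext S
    simp only [hA, Finset.mem_filter, Finset.mem_powersetCard]
    constructor
    · rintro ⟨⟨⟨hsub, hcard⟩, hsp⟩, hnm⟩
      refine ⟨⟨fun x hx => ?_, hcard⟩, hsp⟩
      have := hsub hx
      simp only [Finset.mem_range] at this ⊢
      rcases Nat.lt_succ_iff_lt_or_eq.mp this with h | h
      · exact h
      · exact absurd (h ▸ hx) hnm
    · rintro ⟨⟨hsub, hcard⟩, hsp⟩
      have hnm : (m+1) ∉ S := fun h => by simpa using hsub h
      exact ⟨⟨⟨fun x hx => Finset.mem_range.mpr (Nat.lt_succ_of_lt (Finset.mem_range.mp (hsub hx))), hcard⟩, hsp⟩, hnm⟩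
  have h2 : (A.filter fun S => (m+1) ∈ S).card = pathCount m k := by
    unfold pathCount
    refine Finset.card_nbij' (fun S => S.erase (m+1)) (fun T => insert (m+1) T) ?_ ?_ ?_ ?_
    · rintro S hS
      simp only [Finset.mem_coe, hA, Finset.mem_filter, Finset.mem_powersetCard] at hS ⊢
      obtain ⟨⟨⟨hsub, hcard⟩, hsp⟩, hm⟩ := hS
      refine ⟨⟨fun x hx => ?_, ?_⟩, fun i hi => fun h => hsp i (Finset.mem_of_mem_erase hi) (Finset.mem_of_mem_erase h)⟩
      · rw [Finset.mem_erase] at hx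
        obtain ⟨hne, hxS⟩ := hx
        have hlt : x < m + 2 := Finset.mem_range.mp (hsub hxS)
        have hxm : x ≠ m := by
          rintro rfl
          exact hsp x hxS hm
        simp only [Finset.mem_range]
        omega
      · rw [Finset.card_erase_of_mem hm, hcard]
        omega
    · rintro T hT
      simp only [Finset.mem_coe, hA, Finset.mem_filter, Finset.mem_powersetCard] at hT ⊢
      obtain ⟨⟨hsub, hcard⟩, hsp⟩ := hT
      have hmT : (m+1) ∉ T := fun h => by have := Finset.mem_range.mp (hsub h); omega
      refine ⟨⟨⟨fun x hx => ?_, ?_⟩, ?_⟩, Finset.mem_insert_self _ _⟩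
      · rcases Finset.mem_insert.mp hx with rfl | hx
        · simp
        · have := Finset.mem_range.mp (hsub hx); simp only [Finset.mem_range]; omega
      · rw [Finset.card_insert_of_notMem hmT, hcard]
      · intro i hi hcontra
        rcases Finset.mem_insert.mp hi with rfl | hi
        · rcases Finset.mem_insert.mp hcontra with h | h
          · omega
          · have := Finset.mem_range.mp (hsub h); omega
        · rcases Finset.mem_insert.mp hcontra with h | h
          · have := Finset.mem_range.mp (hsub hi); omega
          · exact hsp i hi h
    · rintro S hS
      simp only [Finset.mem_coe, Finset.mem_filter] at hS
      exact Finset.insert_erase hS.2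
    · rintro T hT
      simp only [Finset.mem_coe, hA, Finset.mem_filter, Finset.mem_powersetCard] at hT
      have hmT : (m+1) ∉ T := fun h => by have := Finset.mem_range.mp (hT.1.1 h); omega
      exact Finset.erase_insert hmT
  omega

lemma pathCount_eq (m k : ℕ) : pathCount m k = Nat.choose (m + 1 - k) k := by
  induction m using Nat.twoStepInduction generalizing k with
  | zero =>
    cases k with
    | zero => simp [pathCount, Finset.filter_singleton]
    | succ k =>
      simp only [pathCount, Finset.range_zero]
      rw [Finset.powersetCard_eq_empty.mpr (by simp)]
      simp [Nat.choose_eq_zero_of_lt]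
  | one =>
    cases k with
    | zero => simp [pathCount, Finset.filter_singleton]
    | succ k =>
      cases k with
      | zero =>
        simp only [pathCount]
        have : (Finset.range 1).powersetCard 1 = {{0}} := by decide
        rw [this, Finset.filter_singleton]
        norm_num
      | succ k =>
        simp only [pathCount]
        rw [Finset.powersetCard_eq_empty.mpr (by simp)]
        simp [Nat.choose_eq_zero_of_lt]
  | more m ih1 ih2 =>
    cases k with
    | zero => simp [pathCount, Finset.filter_singleton]
    | succ k =>
      rw [pathCount_recur, ih2, ih1]
      rcases le_or_gt k (m+1) with h | h
      · have e1 : m + 1 + 1 - (k+1) = m + 1 - k := by omega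
        have e2 : m + 2 + 1 - (k+1) = (m + 1 - k) + 1 := by omega
        rw [e1, e2, Nat.choose_succ_succ]
        simp only [Nat.succ_eq_add_one]
        omega
      · rw [Nat.choose_eq_zero_of_lt (by omega), Nat.choose_eq_zero_of_lt (by omega),
          Nat.choose_eq_zero_of_lt (by omega)]
lemma castinj {n : ℕ} [NeZero n] {a b : ℕ} (ha : a < n) (hb : b < n)
    (h : (a : ZMod n) = (b : ZMod n)) : a = b := by
  have := congrArg ZMod.val h
  rwa [ZMod.val_cast_of_lt ha, ZMod.val_cast_of_lt hb] at this

lemma cast_val_eq {n : ℕ} [NeZero n] (z : ZMod n) : ((z.val : ℕ) : ZMod n) = z :=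
  ZMod.natCast_rightInverse z

lemma caseA (n k : ℕ) [NeZero n] (hn : 3 ≤ n) :
    (((Finset.univ : Finset (Finset (ZMod n))).filter fun S =>
      (S.card = k ∧ ∀ i ∈ S, i + 1 ∉ S) ∧ (0 : ZMod n) ∉ S)).card = pathCount (n - 1) k := by
  classical
  refine Finset.card_nbij' (fun S => S.image (fun z => z.val - 1))
    (fun T => T.image (fun t => ((t + 1 : ℕ) : ZMod n))) ?_ ?_ ?_ ?_
  · rintro S hS
    simp only [Finset.mem_coe, Finset.mem_filter, Finset.mem_univ, true_and] at hS
    obtain ⟨⟨hcard, hsp⟩, h0⟩ := hS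
    have hval : ∀ z ∈ S, 1 ≤ z.val ∧ z.val < n := by
      intro z hz
      refine ⟨?_, ZMod.val_lt z⟩
      by_contra h
      push_neg at h
      interval_cases hv : z.val
      exact h0 (((ZMod.val_eq_zero z).mp hv) ▸ hz)
    have hinj : Set.InjOn (fun z : ZMod n => z.val - 1) ↑S := by
      intro z hz w hw h
      simp only at h
      have h1 := hval z hz
      have h2 := hval w hw
      have : z.val = w.val := by omega
      rw [← cast_val_eq z, ← cast_val_eq w, this]
    simp only [Finset.mem_coe, Finset.mem_filter, Finset.mem_powersetCard]
    refine ⟨⟨?_, ?_⟩, ?_⟩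
    · intro x hx
      obtain ⟨z, hz, rfl⟩ := Finset.mem_image.mp hx
      have := hval z hz
      simp only [Finset.mem_range]
      omega
    · rw [Finset.card_image_of_injOn hinj, hcard]
    · intro a ha hcon
      obtain ⟨z, hz, hze⟩ := Finset.mem_image.mp ha
      obtain ⟨w, hw, hwe⟩ := Finset.mem_image.mp hcon
      have h1 := hval z hz
      have h2 := hval w hw
      have hvw : w.val = z.val + 1 := by omega
      have : w = z + 1 := by
        rw [← cast_val_eq w, hvw]
        push_cast
        rw [cast_val_eq z]
      exact hsp z hz (this ▸ hw)
  · rintro T hT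
    simp only [Finset.mem_coe, Finset.mem_filter, Finset.mem_powersetCard] at hT
    obtain ⟨⟨hsub, hcard⟩, hsp⟩ := hT
    have hlt : ∀ t ∈ T, t + 1 < n := by
      intro t ht
      have := Finset.mem_range.mp (hsub ht)
      omega
    have hinj : Set.InjOn (fun t : ℕ => ((t + 1 : ℕ) : ZMod n)) ↑T := by
      intro a ha b hb h
      have := castinj (hlt a ha) (hlt b hb) h
      omega
    simp only [Finset.mem_coe, Finset.mem_filter, Finset.mem_univ, true_and]
    refine ⟨⟨?_, ?_⟩, ?_⟩
    · rw [Finset.card_image_of_injOn hinj, hcard]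
    · intro i hi hcon
      obtain ⟨t, ht, rfl⟩ := Finset.mem_image.mp hi
      obtain ⟨s, hs, hse⟩ := Finset.mem_image.mp hcon
      have he : ((t + 2 : ℕ) : ZMod n) = ((s + 1 : ℕ) : ZMod n) := by
        push_cast at hse ⊢
        linear_combination -hse
      have hs1 : s + 1 < n := hlt s hs
      rcases lt_or_ge (t + 2) n with h | h
      · have := castinj h hs1 he
        have : s = t + 1 := by omega
        exact hsp t ht (this ▸ hs)
      · have ht2 : t + 2 = n := by have := hlt t ht; omega
        have : ((t + 2 : ℕ) : ZMod n) = 0 := by rw [ht2]; simp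
        rw [this] at he
        have := congrArg ZMod.val he.symm
        rw [ZMod.val_cast_of_lt hs1, ZMod.val_zero] at this
        omega
    · intro hcon
      obtain ⟨t, ht, hte⟩ := Finset.mem_image.mp hcon
      have := congrArg ZMod.val hte
      rw [ZMod.val_cast_of_lt (hlt t ht), ZMod.val_zero] at this
      omega
  · rintro S hS
    simp only [Finset.mem_coe, Finset.mem_filter, Finset.mem_univ, true_and] at hS
    obtain ⟨⟨hcard, hsp⟩, h0⟩ := hS
    dsimp only
    rw [Finset.image_image]
    have : ∀ z ∈ S, ((z.val - 1 + 1 : ℕ) : ZMod n) = z := by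
      intro z hz
      have hz0 : z.val ≠ 0 := fun h => h0 (((ZMod.val_eq_zero z).mp h) ▸ hz)
      rw [show z.val - 1 + 1 = z.val by omega, cast_val_eq]
    calc S.image _ = S.image id := Finset.image_congr (fun z hz => this z hz)
      _ = S := Finset.image_id
  · rintro T hT
    simp only [Finset.mem_coe, Finset.mem_filter, Finset.mem_powersetCard] at hT
    obtain ⟨⟨hsub, hcard⟩, hsp⟩ := hT
    dsimp only
    rw [Finset.image_image]
    have : ∀ t ∈ T, (((t + 1 : ℕ) : ZMod n)).val - 1 = t := by
      intro t ht
      have : t + 1 < n := by have := Finset.mem_range.mp (hsub ht); omega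
      rw [ZMod.val_cast_of_lt this]
      omega
    calc T.image _ = T.image id := Finset.image_congr (fun t ht => this t ht)
      _ = T := Finset.image_id

lemma caseB (n k : ℕ) [NeZero n] (hn : 3 ≤ n) (hk : 1 ≤ k) :
    (((Finset.univ : Finset (Finset (ZMod n))).filter fun S =>
      (S.card = k ∧ ∀ i ∈ S, i + 1 ∉ S) ∧ (0 : ZMod n) ∈ S)).card = pathCount (n - 3) (k - 1) := by
  classical
  refine Finset.card_nbij' (fun S => (S.erase 0).image (fun z => z.val - 2))
    (fun T => insert (0 : ZMod n) (T.image (fun t => ((t + 2 : ℕ) : ZMod n)))) ?_ ?_ ?_ ?_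
  · rintro S hS
    simp only [Finset.mem_coe, Finset.mem_filter, Finset.mem_univ, true_and] at hS
    obtain ⟨⟨hcard, hsp⟩, h0⟩ := hS
    have hval : ∀ z ∈ S.erase 0, 2 ≤ z.val ∧ z.val ≤ n - 2 := by
      intro z hz
      rw [Finset.mem_erase] at hz
      obtain ⟨hne, hzS⟩ := hz
      have hv0 : z.val ≠ 0 := fun h => hne ((ZMod.val_eq_zero z).mp h)
      have hv1 : z.val ≠ 1 := by
        intro h
        have : z = 0 + 1 := by rw [← cast_val_eq z, h]; push_cast; ring
        exact hsp 0 h0 (this ▸ hzS)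
      have hvlt : z.val < n := ZMod.val_lt z
      have hvn1 : z.val ≠ n - 1 := by
        intro h
        have : z + 1 = 0 := by
          rw [← cast_val_eq z, h]
          rw [show ((n - 1 : ℕ) : ZMod n) + 1 = ((n - 1 + 1 : ℕ) : ZMod n) by push_cast; ring]
          rw [show n - 1 + 1 = n by omega]
          simp
        exact hsp z hzS (this ▸ h0)
      omega
    have hinj : Set.InjOn (fun z : ZMod n => z.val - 2) ↑(S.erase 0) := by
      intro z hz w hw h
      simp only at h
      have h1 := hval z hz
      have h2 := hval w hw
      have : z.val = w.val := by omega
      rw [← cast_val_eq z, ← cast_val_eq w, this]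
    simp only [Finset.mem_coe, Finset.mem_filter, Finset.mem_powersetCard]
    refine ⟨⟨?_, ?_⟩, ?_⟩
    · intro x hx
      obtain ⟨z, hz, rfl⟩ := Finset.mem_image.mp hx
      have := hval z hz
      simp only [Finset.mem_range]
      omega
    · rw [Finset.card_image_of_injOn hinj, Finset.card_erase_of_mem h0, hcard]
    · intro a ha hcon
      obtain ⟨z, hz, hze⟩ := Finset.mem_image.mp ha
      obtain ⟨w, hw, hwe⟩ := Finset.mem_image.mp hcon
      have h1 := hval z hz
      have h2 := hval w hw
      have hvw : w.val = z.val + 1 := by omega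
      have : w = z + 1 := by
        rw [← cast_val_eq w, hvw]
        push_cast
        rw [cast_val_eq z]
      exact hsp z (Finset.mem_of_mem_erase hz) (this ▸ Finset.mem_of_mem_erase hw)
  · rintro T hT
    simp only [Finset.mem_coe, Finset.mem_filter, Finset.mem_powersetCard] at hT
    obtain ⟨⟨hsub, hcard⟩, hsp⟩ := hT
    have hlt : ∀ t ∈ T, t + 2 < n := by
      intro t ht
      have := Finset.mem_range.mp (hsub ht)
      omega
    have h0im : (0 : ZMod n) ∉ T.image (fun t => ((t + 2 : ℕ) : ZMod n)) := by
      intro hcon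
      obtain ⟨t, ht, hte⟩ := Finset.mem_image.mp hcon
      have := congrArg ZMod.val hte
      rw [ZMod.val_cast_of_lt (hlt t ht), ZMod.val_zero] at this
      omega
    have hinj : Set.InjOn (fun t : ℕ => ((t + 2 : ℕ) : ZMod n)) ↑T := by
      intro a ha b hb h
      have := castinj (hlt a ha) (hlt b hb) h
      omega
    simp only [Finset.mem_coe, Finset.mem_filter, Finset.mem_univ, true_and]
    refine ⟨⟨?_, ?_⟩, Finset.mem_insert_self _ _⟩
    · rw [Finset.card_insert_of_notMem h0im, Finset.card_image_of_injOn hinj, hcard]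
      omega
    · intro i hi hcon
      rcases Finset.mem_insert.mp hi with rfl | hi
      · rw [zero_add] at hcon
        rcases Finset.mem_insert.mp hcon with h | h
        · have h1 : ((1 : ℕ) : ZMod n) = 0 := by exact_mod_cast h
          have := congrArg ZMod.val h1
          rw [ZMod.val_cast_of_lt (by omega : (1:ℕ) < n), ZMod.val_zero] at this
          omega
        · obtain ⟨t, ht, hte⟩ := Finset.mem_image.mp h
          have h1n : (1 : ℕ) < n := by omega
          have := congrArg ZMod.val hte
          rw [ZMod.val_cast_of_lt (hlt t ht), ZMod.val_one_eq_one_mod] at this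
          rw [Nat.mod_eq_of_lt h1n] at this
          omega
      · obtain ⟨t, ht, rfl⟩ := Finset.mem_image.mp hi
        rcases Finset.mem_insert.mp hcon with h | h
        · -- cast(t+2) + 1 = 0, but t+3 ≤ n-1 < n so val = t+3 ≠ 0
          have he : ((t + 3 : ℕ) : ZMod n) = 0 := by
            rw [← h]; push_cast; ring
          have ht3 : t + 3 < n := by
            have := Finset.mem_range.mp (hsub ht); omega
          have := congrArg ZMod.val he
          rw [ZMod.val_cast_of_lt ht3, ZMod.val_zero] at this
          omega
        · obtain ⟨s, hs, hse⟩ := Finset.mem_image.mp h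
          have he : ((t + 3 : ℕ) : ZMod n) = ((s + 2 : ℕ) : ZMod n) := by
            push_cast at hse ⊢
            linear_combination -hse
          have ht3 : t + 3 < n := by
            have := Finset.mem_range.mp (hsub ht); omega
          have := castinj ht3 (hlt s hs) he
          have : s = t + 1 := by omega
          exact hsp t ht (this ▸ hs)
  · rintro S hS
    simp only [Finset.mem_coe, Finset.mem_filter, Finset.mem_univ, true_and] at hS
    obtain ⟨⟨hcard, hsp⟩, h0⟩ := hS
    dsimp only
    rw [Finset.image_image]
    have hval2 : ∀ z ∈ S.erase 0, ((z.val - 2 + 2 : ℕ) : ZMod n) = z := by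
      intro z hz
      rw [Finset.mem_erase] at hz
      obtain ⟨hne, hzS⟩ := hz
      have hv0 : z.val ≠ 0 := fun h => hne ((ZMod.val_eq_zero z).mp h)
      have hv1 : z.val ≠ 1 := by
        intro h
        have : z = 0 + 1 := by rw [← cast_val_eq z, h]; push_cast; ring
        exact hsp 0 h0 (this ▸ hzS)
      rw [show z.val - 2 + 2 = z.val by omega, cast_val_eq]
    calc insert (0 : ZMod n) ((S.erase 0).image _)
        = insert (0 : ZMod n) ((S.erase 0).image id) := by
          exact congrArg _ (Finset.image_congr (fun z hz => hval2 z hz))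
      _ = insert (0 : ZMod n) (S.erase 0) := by rw [Finset.image_id]
      _ = S := Finset.insert_erase h0
  · rintro T hT
    simp only [Finset.mem_coe, Finset.mem_filter, Finset.mem_powersetCard] at hT
    obtain ⟨⟨hsub, hcard⟩, hsp⟩ := hT
    have hlt : ∀ t ∈ T, t + 2 < n := by
      intro t ht
      have := Finset.mem_range.mp (hsub ht)
      omega
    have h0im : (0 : ZMod n) ∉ T.image (fun t => ((t + 2 : ℕ) : ZMod n)) := by
      intro hcon
      obtain ⟨t, ht, hte⟩ := Finset.mem_image.mp hcon
      have := congrArg ZMod.val hte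
      rw [ZMod.val_cast_of_lt (hlt t ht), ZMod.val_zero] at this
      omega
    dsimp only
    rw [Finset.erase_insert h0im, Finset.image_image]
    have : ∀ t ∈ T, (((t + 2 : ℕ) : ZMod n)).val - 2 = t := by
      intro t ht
      rw [ZMod.val_cast_of_lt (hlt t ht)]
      omega
    calc T.image _ = T.image id := Finset.image_congr (fun t ht => this t ht)
      _ = T := Finset.image_id

/-- For every `n ≥ 3` and every `k` with `1 ≤ k ≤ n - 1`, the number `N` of `k`-element
subsets `S` of `ZMod n` with no two cyclically adjacent elements (there is no `i` with
both `i ∈ S` and `i + 1 ∈ S`) satisfies `(n - k) * N = n * C(n - k, k)`, i.e.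
`N = C(n - k, k) * n / (n - k)`. In particular `N = 0` when `k > ⌊n/2⌋`. -/
theorem card_no_cyclically_adjacent_subsets (n k : ℕ) [NeZero n] (hn : 3 ≤ n)
    (hk1 : 1 ≤ k) (hk2 : k ≤ n - 1) :
    (n - k) * ((Finset.univ : Finset (Finset (ZMod n))).filter fun S =>
        S.card = k ∧ ∀ i ∈ S, i + 1 ∉ S).card = n * Nat.choose (n - k) k ∧
    (n / 2 < k → ((Finset.univ : Finset (Finset (ZMod n))).filter fun S =>
        S.card = k ∧ ∀ i ∈ S, i + 1 ∉ S).card = 0) := by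
  classical
  have hsplit := Finset.card_filter_add_card_filter_not
    (s := (Finset.univ : Finset (Finset (ZMod n))).filter fun S =>
        S.card = k ∧ ∀ i ∈ S, i + 1 ∉ S) (p := fun S => (0 : ZMod n) ∈ S)
  rw [Finset.filter_filter, Finset.filter_filter] at hsplit
  have hB := caseB n k hn hk1
  have hA := caseA n k hn
  have hN : ((Finset.univ : Finset (Finset (ZMod n))).filter fun S =>
        S.card = k ∧ ∀ i ∈ S, i + 1 ∉ S).card
      = pathCount (n - 3) (k - 1) + pathCount (n - 1) k := by
    rw [← hsplit, ← hB, ← hA]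
  rw [hN, pathCount_eq, pathCount_eq]
  have e1 : n - 1 + 1 - k = n - k := by omega
  have e2 : n - 3 + 1 - (k - 1) = n - k - 1 := by omega
  rw [e1, e2]
  constructor
  · have hid : (n - k) * Nat.choose (n - k - 1) (k - 1) = Nat.choose (n - k) k * k := by
      have := Nat.add_one_mul_choose_eq (n - k - 1) (k - 1)
      rw [show n - k - 1 + 1 = n - k by omega, show k - 1 + 1 = k by omega] at this
      exact this
    set a := Nat.choose (n - k) k
    set b := Nat.choose (n - k - 1) (k - 1)
    calc (n - k) * (b + a) = (n - k) * b + (n - k) * a := by ring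
      _ = a * k + (n - k) * a := by rw [hid]
      _ = (k + (n - k)) * a := by ring
      _ = n * a := by rw [show k + (n - k) = n by omega]
      _ = n * a := rfl
  · intro hk
    rw [Nat.choose_eq_zero_of_lt (by omega), Nat.choose_eq_zero_of_lt (by omega)]
end

section
/- (Theorem 6.1) For every n ≥ 4, the generating polynomial of independent sets of the graph G_n, namely the sum over all independent sets S of G_n of X^(card S), equals 1 + (n+2)·X + Σ_{k=2}^{⌊n/2⌋} (n/(n−k))·C(n−k, k)·X^k as a polynomial over ℚ. Equivalently: G_n has exactly one independent set of size 0, exactly n+2 independent sets of size 1, exactly n·C(n−k, k)/(n−k) independent sets of size k for each 2 ≤ k ≤ ⌊n/2⌋, and no independent sets of size greater than ⌊n/2⌋. -/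
/-- The region-connect graph `G_n` of the standard projection `T(2,n)` of the
`(2,n)`-torus link: vertices are the `n + 2` regions; two distinct vertices `i, j` are
adjacent iff `i ≥ n`, or `j ≥ n`, or both `i, j < n` and `j ≡ i + 1` or `j ≡ i - 1`
(mod `n`). -/
def torusGraph (n : ℕ) : SimpleGraph (Fin (n + 2)) where
  Adj i j := i ≠ j ∧ (n ≤ (i : ℕ) ∨ n ≤ (j : ℕ) ∨
    ((i : ℕ) < n ∧ (j : ℕ) < n ∧
      ((j : ℕ) = ((i : ℕ) + 1) % n ∨ (i : ℕ) = ((j : ℕ) + 1) % n)))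
  symm := by
    constructor
    intro i j ⟨hne, h⟩
    exact ⟨hne.symm, by tauto⟩
  loopless := by
    constructor
    intro i ⟨hne, _⟩
    exact hne rfl

instance (n : ℕ) : DecidableRel (torusGraph n).Adj := fun i j =>
  inferInstanceAs (Decidable (i ≠ j ∧ (n ≤ (i : ℕ) ∨ n ≤ (j : ℕ) ∨
    ((i : ℕ) < n ∧ (j : ℕ) < n ∧
      ((j : ℕ) = ((i : ℕ) + 1) % n ∨ (i : ℕ) = ((j : ℕ) + 1) % n)))))

/-- A finite set of vertices is independent iff no two of its elements are adjacent. -/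
def IsIndepFinset (n : ℕ) (S : Finset (Fin (n + 2))) : Prop :=
  ∀ i ∈ S, ∀ j ∈ S, ¬ (torusGraph n).Adj i j

instance (n : ℕ) : DecidablePred (IsIndepFinset n) := fun S =>
  inferInstanceAs (Decidable (∀ i ∈ S, ∀ j ∈ S, ¬ (torusGraph n).Adj i j))

namespace TorusAux
open Finset

def pIndep (S : Finset ℕ) : Prop := ∀ i ∈ S, i + 1 ∉ S

instance : DecidablePred pIndep := fun S => inferInstanceAs (Decidable (∀ i ∈ S, i+1 ∉ S))

def pCount (m k : ℕ) : ℕ := (((Finset.range m).powersetCard k).filter pIndep).card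

lemma pCount_zero (m : ℕ) : pCount m 0 = 1 := by
  unfold pCount
  rw [powersetCard_zero]
  rw [filter_singleton]
  simp [pIndep]

lemma pCount_le (m k : ℕ) : pCount m k ≤ Nat.choose m k := by
  unfold pCount
  calc _ ≤ ((Finset.range m).powersetCard k).card := card_filter_le _ _
  _ = _ := by rw [card_powersetCard, card_range]

lemma pCount_succ_succ (m k : ℕ) : pCount (m+2) (k+1) = pCount (m+1) (k+1) + pCount m k := by
  unfold pCount
  rw [← card_filter_add_card_filter_not (s := ((Finset.range (m+2)).powersetCard (k+1)).filter pIndep) (fun S => m+1 ∉ S)]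
  congr 1
  · -- not contains: equals pCount (m+1) (k+1)
    congr 1
    rw [filter_filter]
    ext S
    simp only [mem_filter, mem_powersetCard, mem_range]
    constructor
    · rintro ⟨⟨hsub, hcard⟩, hind, hmem⟩
      refine ⟨⟨?_, hcard⟩, hind⟩
      intro x hx
      have := hsub hx
      rw [mem_range] at this ⊢
      have : x ≠ m + 1 := fun h => hmem (h ▸ hx)
      omega
    · rintro ⟨⟨hsub, hcard⟩, hind⟩
      refine ⟨⟨fun x hx => ?_, hcard⟩, hind, fun h => ?_⟩
      · have := hsub hx; rw [mem_range] at this ⊢; omega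
      · have := hsub h; rw [mem_range] at this; omega
  · -- contains m+1 part ↔ pCount m k
    refine card_bij' (fun S _ => (S.erase (m+1))) (fun T _ => insert (m+1) T) ?hi ?hj ?left ?right
    case hi =>
      intro S hS
      simp only [mem_filter, mem_powersetCard, not_not] at hS ⊢
      obtain ⟨⟨⟨hsub, hcard⟩, hind⟩, hmem⟩ := hS
      have hm : m ∉ S := fun hm => hind m hm hmem
      refine ⟨⟨?_, ?_⟩, ?_⟩
      · intro x hx
        rw [mem_erase] at hx
        have := hsub hx.2
        rw [mem_range] at this ⊢
        have hxm : x ≠ m := fun h => hm (h ▸ hx.2)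
        omega
      · rw [card_erase_of_mem hmem, hcard]; omega
      · intro i hi
        rw [mem_erase] at hi
        intro h
        exact hind i hi.2 (mem_of_mem_erase h)
    case hj =>
      intro T hT
      simp only [mem_filter, mem_powersetCard, not_not] at hT ⊢
      obtain ⟨⟨hsub, hcard⟩, hind⟩ := hT
      have hm1 : m + 1 ∉ T := fun h => by have := hsub h; rw [mem_range] at this; omega
      refine ⟨⟨⟨?_, ?_⟩, ?_⟩, mem_insert_self _ _⟩
      · intro x hx
        rw [mem_insert] at hx
        rcases hx with rfl | hx
        · simp
        · have := hsub hx; rw [mem_range] at this ⊢; omega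
      · rw [card_insert_of_notMem hm1, hcard]
      · intro i hi hi1
        rw [mem_insert] at hi hi1
        rcases hi with rfl | hi
        · rcases hi1 with h | h
          · omega
          · have := hsub h; rw [mem_range] at this; omega
        · rcases hi1 with h | h
          · have := hsub hi; rw [mem_range] at this; omega
          · exact hind i hi h
    case left =>
      intro S hS
      simp only [mem_filter, not_not] at hS
      exact insert_erase hS.2
    case right =>
      intro T hT
      simp only [mem_filter, mem_powersetCard] at hT
      have hm1 : m + 1 ∉ T := fun h => by have := hT.1.1 h; rw [mem_range] at this; omega
      exact erase_insert hm1

lemma pCount_eq (m k : ℕ) : pCount m k = Nat.choose (m + 1 - k) k := by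
  induction m using Nat.strong_induction_on generalizing k with
  | _ m ih =>
    match m, k with
    | m, 0 => simp [pCount_zero]
    | 0, k+1 =>
      have := pCount_le 0 (k+1)
      simp at this
      simp [this, Nat.choose_eq_zero_of_lt]
    | 1, 1 =>
      have : pCount 1 1 = 1 := by decide
      simp [this]
    | 1, k+2 =>
      have := pCount_le 1 (k+2)
      rw [Nat.choose_eq_zero_of_lt (by omega)] at this
      simp at this
      rw [this, Nat.choose_eq_zero_of_lt] <;> omega
    | m+2, k+1 =>
      rw [pCount_succ_succ, ih (m+1) (by omega), ih m (by omega)]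
      rcases Nat.lt_or_ge (k+1) (m+2) with h | h
      · have h1 : m + 2 + 1 - (k+1) = (m + 1 + 1 - (k+1)) + 1 := by omega
        have h2 : m + 1 + 1 - (k+1) = m + 1 - k := by omega
        rw [h1, h2, Nat.choose_succ_succ' ]
        omega
      · rw [Nat.choose_eq_zero_of_lt (by omega), Nat.choose_eq_zero_of_lt (by omega),
          Nat.choose_eq_zero_of_lt (by omega)]

def cIndep (n : ℕ) (S : Finset ℕ) : Prop := ∀ i ∈ S, ∀ j ∈ S, i ≠ j → (i + 1) % n ≠ j

instance (n : ℕ) : DecidablePred (cIndep n) := fun S =>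
  inferInstanceAs (Decidable (∀ i ∈ S, ∀ j ∈ S, i ≠ j → (i + 1) % n ≠ j))

def cCount (n k : ℕ) : ℕ := (((Finset.range n).powersetCard k).filter (cIndep n)).card

lemma cCount_eq (n k : ℕ) (hn : 4 ≤ n) (hk : 2 ≤ k) :
    cCount n k = pCount (n-1) k + pCount (n-3) (k-1) := by
  unfold cCount
  rw [← card_filter_add_card_filter_not (s := ((Finset.range n).powersetCard k).filter (cIndep n)) (fun S => n-1 ∉ S)]
  congr 1
  · -- n-1 ∉ S : equals pCount (n-1) k
    unfold pCount
    rw [filter_filter]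
    congr 1
    ext S
    simp only [mem_filter, mem_powersetCard]
    constructor
    · rintro ⟨⟨hsub, hcard⟩, hcind, hmem⟩
      have hsub' : S ⊆ range (n-1) := by
        intro x hx
        have := hsub hx
        rw [mem_range] at this ⊢
        have : x ≠ n - 1 := fun h => hmem (h ▸ hx)
        omega
      refine ⟨⟨hsub', hcard⟩, ?_⟩
      intro i hi h
      have hi' := hsub' hi; rw [mem_range] at hi'
      have h' := hsub' h; rw [mem_range] at h'
      exact hcind i hi (i+1) h (by omega) (by rw [Nat.mod_eq_of_lt (by omega)])
    · rintro ⟨⟨hsub, hcard⟩, hp⟩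
      have hlt : ∀ x ∈ S, x < n - 1 := fun x hx => by
        have := hsub hx; rwa [mem_range] at this
      refine ⟨⟨fun x hx => by rw [mem_range]; have := hlt x hx; omega, hcard⟩, ?_, fun h => by have := hlt _ h; omega⟩
      intro i hi j hj hij hmod
      have := hlt i hi
      rw [Nat.mod_eq_of_lt (by omega)] at hmod
      exact hp i hi (hmod ▸ hj)
  · -- n-1 ∈ S
    refine card_bij' (fun S _ => (S.erase (n-1)).image (· - 1))
      (fun T _ => insert (n-1) (T.image (· + 1))) ?hi ?hj ?left ?right
    case hi =>
      intro S hS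
      simp only [mem_filter, mem_powersetCard, not_not] at hS ⊢
      obtain ⟨⟨⟨hsub, hcard⟩, hcind⟩, hmem⟩ := hS
      have hlt : ∀ x ∈ S, x < n := fun x hx => by have := hsub hx; rwa [mem_range] at this
      have h0 : 0 ∉ S := fun h0 =>
        hcind (n-1) hmem 0 h0 (by omega) (by rw [Nat.sub_add_cancel (by omega), Nat.mod_self])
      have h2 : n - 2 ∉ S := fun h2 =>
        hcind (n-2) h2 (n-1) hmem (by omega) (by rw [Nat.mod_eq_of_lt (by omega)]; omega)
      have hrange : ∀ x ∈ S.erase (n-1), 1 ≤ x ∧ x ≤ n - 3 := by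
        intro x hx
        rw [mem_erase] at hx
        have := hlt x hx.2
        have hx1 : x ≠ 0 := fun h => h0 (h ▸ hx.2)
        have hx2 : x ≠ n - 2 := fun h => h2 (h ▸ hx.2)
        omega
      refine ⟨⟨?_, ?_⟩, ?_⟩
      · intro y hy
        rw [mem_image] at hy
        obtain ⟨x, hx, rfl⟩ := hy
        have := hrange x hx
        rw [mem_range]; omega
      · rw [card_image_of_injOn, card_erase_of_mem hmem, hcard]
        intro a ha b hb hab
        have hab' : a - 1 = b - 1 := hab
        have := hrange a ha; have := hrange b hb
        omega
      · intro y hy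
        rw [mem_image] at hy
        obtain ⟨x, hx, rfl⟩ := hy
        intro hcon
        rw [mem_image] at hcon
        obtain ⟨z, hz, hze⟩ := hcon
        have hxr := hrange x hx
        have hzr := hrange z hz
        have hzx : z = x + 1 := by omega
        rw [mem_erase] at hx hz
        exact hcind x hx.2 z hz.2 (by omega)
          (by rw [Nat.mod_eq_of_lt (by omega)]; omega)
    case hj =>
      intro T hT
      simp only [mem_filter, mem_powersetCard, not_not] at hT ⊢
      obtain ⟨⟨hsub, hcard⟩, hp⟩ := hT
      have hlt : ∀ x ∈ T, x < n - 3 := fun x hx => by have := hsub hx; rwa [mem_range] at this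
      have hnot : n - 1 ∉ T.image (· + 1) := by
        rw [mem_image]
        rintro ⟨x, hx, hxe⟩
        have := hlt x hx; omega
      refine ⟨⟨⟨?_, ?_⟩, ?_⟩, mem_insert_self _ _⟩
      · intro x hx
        rw [mem_insert, mem_image] at hx
        rw [mem_range]
        rcases hx with rfl | ⟨y, hy, rfl⟩
        · omega
        · have := hlt y hy; omega
      · rw [card_insert_of_notMem hnot, card_image_of_injective _ (add_left_injective 1), hcard]
        omega
      · intro i hi j hj hij
        rw [mem_insert, mem_image] at hi hj
        rcases hi with rfl | ⟨a, ha, rfl⟩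
        · rw [Nat.sub_add_cancel (by omega), Nat.mod_self]
          rcases hj with rfl | ⟨b, hb, rfl⟩
          · omega
          · omega
        · have hal := hlt a ha
          rw [Nat.mod_eq_of_lt (by omega)]
          rcases hj with rfl | ⟨b, hb, rfl⟩
          · omega
          · intro h
            have : b = a + 1 := by omega
            exact hp a ha (this ▸ hb)
    case left =>
      intro S hS
      simp only [mem_filter, mem_powersetCard, not_not] at hS
      obtain ⟨⟨⟨hsub, hcard⟩, hcind⟩, hmem⟩ := hS
      have h0 : 0 ∉ S := fun h0 =>
        hcind (n-1) hmem 0 h0 (by omega) (by rw [Nat.sub_add_cancel (by omega), Nat.mod_self])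
      show insert (n-1) (((S.erase (n-1)).image (· - 1)).image (· + 1)) = S
      rw [image_image]
      have : ((S.erase (n-1)).image ((· + 1) ∘ (· - 1))) = S.erase (n-1) := by
        rw [image_congr (g := id), image_id]
        intro x hx
        simp only [mem_coe, mem_erase] at hx
        have : x ≠ 0 := fun h => h0 (h ▸ hx.2)
        simp only [Function.comp, id]
        omega
      rw [this, insert_erase hmem]
    case right =>
      intro T hT
      simp only [mem_filter, mem_powersetCard] at hT
      obtain ⟨⟨hsub, hcard⟩, hp⟩ := hT
      have hlt : ∀ x ∈ T, x < n - 3 := fun x hx => by have := hsub hx; rwa [mem_range] at this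
      have hnot : n - 1 ∉ T.image (· + 1) := by
        rw [mem_image]
        rintro ⟨x, hx, hxe⟩
        have := hlt x hx; omega
      show ((insert (n-1) (T.image (· + 1))).erase (n-1)).image (· - 1) = T
      rw [erase_insert hnot, image_image]
      rw [image_congr (g := id), image_id]
      intro x hx
      simp only [mem_coe] at hx
      simp only [Function.comp, id]
      omega

def N (n k : ℕ) : ℕ :=
  (((Finset.univ : Finset (Finset (Fin (n + 2)))).filter (IsIndepFinset n)).filter
    (fun S => S.card = k)).card

lemma N_zero (n : ℕ) : N n 0 = 1 := by
  unfold N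
  have h : (((Finset.univ : Finset (Finset (Fin (n + 2)))).filter (IsIndepFinset n)).filter
      (fun S => S.card = 0)) = {∅} := by
    ext S
    simp only [mem_filter, mem_univ, true_and, mem_singleton, card_eq_zero]
    constructor
    · exact fun h => h.2
    · rintro rfl
      exact ⟨fun i hi => absurd hi (notMem_empty i), rfl⟩
  rw [h, card_singleton]

lemma N_one (n : ℕ) : N n 1 = n + 2 := by
  unfold N
  have h : (((Finset.univ : Finset (Finset (Fin (n + 2)))).filter (IsIndepFinset n)).filter
      (fun S => S.card = 1)) = Finset.univ.image (fun a : Fin (n+2) => ({a} : Finset (Fin (n+2)))) := by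
    ext S
    simp only [mem_filter, mem_univ, true_and, mem_image, card_eq_one]
    constructor
    · rintro ⟨_, a, rfl⟩
      exact ⟨a, rfl⟩
    · rintro ⟨a, rfl⟩
      refine ⟨?_, a, rfl⟩
      intro i hi j hj
      rw [mem_singleton] at hi hj
      subst hi; subst hj
      exact (torusGraph n).loopless.irrefl _
  rw [h, card_image_of_injective _ Finset.singleton_injective, card_univ, Fintype.card_fin]

open Fin.NatCast in
lemma N_eq_cCount (n k : ℕ) (hn : 4 ≤ n) (hk : 2 ≤ k) : N n k = cCount n k := by
  unfold N cCount
  refine card_bij' (fun S _ => S.image Fin.val)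
    (fun T _ => T.image (fun t : ℕ => (t : Fin (n+2)))) ?hi ?hj ?left ?right
  case hi =>
    intro S hS
    simp only [mem_filter, mem_univ, true_and] at hS
    obtain ⟨hind, hcard⟩ := hS
    have hlt : ∀ i ∈ S, (i : ℕ) < n := by
      intro i hi
      by_contra h
      push_neg at h
      obtain ⟨j, hj, hji⟩ := exists_mem_ne (s := S) (by omega) i
      exact hind j hj i hi ⟨hji, Or.inr (Or.inl h)⟩
    simp only [mem_filter, mem_powersetCard]
    refine ⟨⟨?_, ?_⟩, ?_⟩
    · intro y hy
      rw [mem_image] at hy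
      obtain ⟨i, hi, rfl⟩ := hy
      rw [mem_range]
      exact hlt i hi
    · rw [card_image_of_injective _ Fin.val_injective, hcard]
    · intro y hy z hz hyz hmod
      rw [mem_image] at hy hz
      obtain ⟨i, hi, rfl⟩ := hy
      obtain ⟨j, hj, rfl⟩ := hz
      exact hind i hi j hj
        ⟨fun h => hyz (congrArg _ h),
         Or.inr (Or.inr ⟨hlt i hi, hlt j hj, Or.inl hmod.symm⟩)⟩
  case hj =>
    intro T hT
    simp only [mem_filter, mem_powersetCard] at hT
    obtain ⟨⟨hsub, hcard⟩, hcind⟩ := hT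
    have hlt : ∀ t ∈ T, t < n := fun t ht => by have := hsub ht; rwa [mem_range] at this
    have hval : ∀ t ∈ T, ((t : Fin (n+2)) : ℕ) = t := fun t ht =>
      Fin.val_cast_of_lt (by have := hlt t ht; omega)
    simp only [mem_filter, mem_univ, true_and]
    constructor
    · intro a ha b hb hadj
      rw [mem_image] at ha hb
      obtain ⟨t, ht, rfl⟩ := ha
      obtain ⟨t', ht', rfl⟩ := hb
      obtain ⟨hne, hor⟩ := hadj
      have htt : t ≠ t' := fun h => hne (by rw [h])
      rcases hor with h | h | ⟨_, _, h | h⟩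
      · rw [hval t ht] at h; exact absurd h (by have := hlt t ht; omega)
      · rw [hval t' ht'] at h; exact absurd h (by have := hlt t' ht'; omega)
      · rw [hval t ht, hval t' ht'] at h
        exact hcind t ht t' ht' htt h.symm
      · rw [hval t ht, hval t' ht'] at h
        exact hcind t' ht' t ht htt.symm h.symm
    · rw [card_image_of_injOn, hcard]
      intro a ha b hb hab
      have : ((a : Fin (n+2)) : ℕ) = ((b : Fin (n+2)) : ℕ) := congrArg Fin.val hab
      rwa [hval a ha, hval b hb] at this
  case left =>
    intro S hS
    show (S.image Fin.val).image (fun t : ℕ => (t : Fin (n+2))) = S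
    rw [image_image]
    rw [image_congr (g := id), image_id]
    intro x hx
    simp only [Function.comp, id]
    exact Fin.cast_val_eq_self x
  case right =>
    intro T hT
    simp only [mem_filter, mem_powersetCard] at hT
    have hlt : ∀ t ∈ T, t < n := fun t ht => by have := hT.1.1 ht; rwa [mem_range] at this
    show (T.image (fun t : ℕ => (t : Fin (n+2)))).image Fin.val = T
    rw [image_image]
    rw [image_congr (g := id), image_id]
    intro x hx
    simp only [mem_coe] at hx
    simp only [Function.comp, id]
    exact Fin.val_cast_of_lt (by have := hlt x hx; omega)

lemma choose_id (a b : ℕ) (h1 : 1 ≤ a) (h2 : 1 ≤ b) :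
    a * Nat.choose (a-1) (b-1) = Nat.choose a b * b := by
  obtain ⟨a', rfl⟩ := Nat.exists_eq_add_of_le h1
  obtain ⟨b', rfl⟩ := Nat.exists_eq_add_of_le h2
  simpa [Nat.add_comm] using Nat.add_one_mul_choose_eq a' b'

lemma N_formula (n k : ℕ) (hn : 4 ≤ n) (hk : 2 ≤ k) :
    N n k = Nat.choose (n-k) k + Nat.choose (n-2-(k-1)) (k-1) := by
  rw [N_eq_cCount n k hn hk, cCount_eq n k hn hk, pCount_eq, pCount_eq]
  congr 2 <;> omega

lemma N_big (n k : ℕ) (hn : 4 ≤ n) (hk : 2 ≤ k) (hbig : n / 2 < k) : N n k = 0 := by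
  rw [N_formula n k hn hk, Nat.choose_eq_zero_of_lt (by omega),
    Nat.choose_eq_zero_of_lt (by omega)]

lemma N_val (n k : ℕ) (hn : 4 ≤ n) (hk : 2 ≤ k) (hk2 : k ≤ n / 2) :
    (N n k : ℚ) = (n : ℚ) / ((n : ℚ) - (k : ℚ)) * (Nat.choose (n - k) k : ℚ) := by
  have hkn : k < n := by omega
  have h2k : 2 * k ≤ n := by omega
  rw [N_formula n k hn hk]
  have hrw : n - 2 - (k - 1) = n - k - 1 := by omega
  rw [hrw]
  have hnat : n * Nat.choose (n-k) k
      = (n - k) * (Nat.choose (n-k) k + Nat.choose (n-k-1) (k-1)) := by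
    have key := choose_id (n - k) k (by omega) (by omega)
    have hn' : n = (n - k) + k := by omega
    calc n * Nat.choose (n-k) k = (n - k) * Nat.choose (n-k) k + k * Nat.choose (n-k) k := by
          rw [← Nat.add_mul, ← hn']
      _ = (n - k) * Nat.choose (n-k) k + (n-k) * Nat.choose (n-k-1) (k-1) := by
          rw [Nat.mul_comm k, ← key]
      _ = _ := by ring
  have hq := congrArg (fun m : ℕ => (m : ℚ)) hnat
  simp only [Nat.cast_mul, Nat.cast_add] at hq
  have hcast : ((n - k : ℕ) : ℚ) = (n : ℚ) - (k : ℚ) := by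
    rw [Nat.cast_sub (by omega)]
  rw [hcast] at hq
  have hne : (n : ℚ) - (k : ℚ) ≠ 0 := by
    have : (k : ℚ) < (n : ℚ) := by exact_mod_cast hkn
    linarith
  field_simp
  push_cast
  linarith [hq]

end TorusAux

open Polynomial in
/-- Theorem 6.1: for every `n ≥ 4`, the generating polynomial over `ℚ` of the independent
sets of `G_n` (the I-generating function of the standard `(2,n)`-torus link projection)
equals `1 + (n+2) X + Σ_{k=2}^{⌊n/2⌋} (n/(n-k)) C(n-k, k) X^k`. -/
theorem torus_I_generating_function (n : ℕ) (hn : 4 ≤ n) :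
    ∑ S ∈ (Finset.univ : Finset (Finset (Fin (n + 2)))).filter (IsIndepFinset n),
        (X : ℚ[X]) ^ S.card
      = 1 + C ((n : ℚ) + 2) * X +
        ∑ k ∈ Finset.Icc 2 (n / 2),
          C ((n : ℚ) / ((n : ℚ) - (k : ℚ)) * (Nat.choose (n - k) k : ℚ)) * X ^ k := by
  classical
  have hmap : ∀ S ∈ (Finset.univ : Finset (Finset (Fin (n + 2)))).filter (IsIndepFinset n),
      S.card ∈ Finset.range (n + 3) := by
    intro S _
    rw [Finset.mem_range]
    have h1 : S.card ≤ n + 2 := by simpa using Finset.card_le_univ S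
    omega
  rw [← Finset.sum_fiberwise_of_maps_to hmap (fun S => (X : ℚ[X]) ^ S.card)]
  have hstep : ∀ k ∈ Finset.range (n + 3),
      (∑ S ∈ ((Finset.univ : Finset (Finset (Fin (n + 2)))).filter (IsIndepFinset n)).filter
        (fun S => S.card = k), (X : ℚ[X]) ^ S.card)
      = C ((TorusAux.N n k : ℚ)) * X ^ k := by
    intro k _
    rw [Finset.sum_congr rfl (fun S hS => by rw [(Finset.mem_filter.mp hS).2]),
      Finset.sum_const, nsmul_eq_mul, ← Polynomial.C_eq_natCast]
    rfl
  rw [Finset.sum_congr rfl hstep]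
  have hsub : insert 0 (insert 1 (Finset.Icc 2 (n / 2))) ⊆ Finset.range (n + 3) := by
    intro k hk
    simp only [Finset.mem_insert, Finset.mem_Icc] at hk
    rw [Finset.mem_range]
    omega
  have hzero : ∀ k ∈ Finset.range (n + 3), k ∉ insert 0 (insert 1 (Finset.Icc 2 (n / 2))) →
      C ((TorusAux.N n k : ℚ)) * X ^ k = 0 := by
    intro k _ hk
    simp only [Finset.mem_insert, Finset.mem_Icc, not_or, not_and, not_le] at hk
    obtain ⟨h0, h1, h2⟩ := hk
    have hbig : n / 2 < k := by
      rcases Nat.lt_or_ge k 2 with h | h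
      · omega
      · exact h2 h
    rw [TorusAux.N_big n k hn (by omega) hbig]
    simp
  rw [← Finset.sum_subset hsub hzero]
  rw [Finset.sum_insert (by simp), Finset.sum_insert (by simp)]
  rw [TorusAux.N_zero, TorusAux.N_one]
  push_cast
  rw [pow_zero, pow_one]
  have hsum : (∑ k ∈ Finset.Icc 2 (n / 2), C ((TorusAux.N n k : ℚ)) * X ^ k)
      = ∑ k ∈ Finset.Icc 2 (n / 2),
          C ((n : ℚ) / ((n : ℚ) - (k : ℚ)) * (Nat.choose (n - k) k : ℚ)) * X ^ k := by
    refine Finset.sum_congr rfl fun k hk => ?_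
    rw [Finset.mem_Icc] at hk
    rw [TorusAux.N_val n k hn hk.1 hk.2]
  rw [hsum, map_one]
  ring
end

section
/- For every n ≥ 4, the maximum cardinality of an independent set of the graph G_n equals ⌊n/2⌋. (This is the isolate-region number of the standard projection of the (2,n)-torus link.) -/
private lemma mod_succ_eq (n a : ℕ) (ha : a < n) :
    (a + 1) % n = if a + 1 = n then 0 else a + 1 := by
  split
  · simp_all
  · exact Nat.mod_eq_of_lt (by omega)

/-- For every `n ≥ 4`, the maximum cardinality of an independent set of `G_n`, i.e. the
isolate-region number of the standard projection of the `(2,n)`-torus link, is `⌊n/2⌋`. -/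
theorem torus_isolate_region_number (n : ℕ) (hn : 4 ≤ n) :
    ((Finset.univ : Finset (Finset (Fin (n + 2)))).filter (IsIndepFinset n)).sup
        Finset.card = n / 2 := by
  apply le_antisymm
  · -- upper bound
    apply Finset.sup_le
    intro S hS
    rw [Finset.mem_filter] at hS
    have hind := hS.2
    by_cases hbig : ∃ v ∈ S, n ≤ (v : ℕ)
    · obtain ⟨v, hv, hvn⟩ := hbig
      have hsub : S ⊆ {v} := by
        intro w hw
        rw [Finset.mem_singleton]
        by_contra hne
        exact hind w hw v hv ⟨hne, Or.inr (Or.inl hvn)⟩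
      calc S.card ≤ ({v} : Finset _).card := Finset.card_le_card hsub
        _ = 1 := Finset.card_singleton v
        _ ≤ n / 2 := by omega
    · push_neg at hbig
      set A : Finset ℕ := S.image Fin.val with hA
      have hAcard : A.card = S.card :=
        Finset.card_image_of_injective S Fin.val_injective
      have hAlt : ∀ a ∈ A, a < n := by
        intro a ha
        rw [hA, Finset.mem_image] at ha
        obtain ⟨i, hi, rfl⟩ := ha
        exact hbig i hi
      set B : Finset ℕ := A.image (fun a => (a + 1) % n) with hB
      have hBcard : B.card = A.card := by
        apply Finset.card_image_of_injOn
        intro a ha b hb hab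
        have ha' := hAlt a (by simpa using ha)
        have hb' := hAlt b (by simpa using hb)
        simp only at hab
        rw [mod_succ_eq n a ha', mod_succ_eq n b hb'] at hab
        split_ifs at hab <;> omega
      have hdisj : Disjoint A B := by
        rw [Finset.disjoint_right]
        intro x hx hxA
        rw [hB, Finset.mem_image] at hx
        obtain ⟨a, ha, rfl⟩ := hx
        have ha' := hAlt a ha
        rw [hA, Finset.mem_image] at ha hxA
        obtain ⟨i, hi, hir⟩ := ha
        obtain ⟨j, hj, hjr⟩ := hxA
        have hmod := mod_succ_eq n a ha'
        have hin : (i : ℕ) < n := hbig i hi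
        have hjn : (j : ℕ) < n := hbig j hj
        apply hind i hi j hj
        refine ⟨?_, Or.inr (Or.inr ⟨hin, hjn, Or.inl ?_⟩)⟩
        · intro h
          rw [h] at hir
          split_ifs at hmod <;> omega
        · rw [hir]; exact hjr
      have hsub : A ∪ B ⊆ Finset.range n := by
        intro x hx
        rw [Finset.mem_union] at hx
        rw [Finset.mem_range]
        rcases hx with hx | hx
        · exact hAlt x hx
        · rw [hB, Finset.mem_image] at hx
          obtain ⟨a, ha, rfl⟩ := hx
          exact Nat.mod_lt _ (by omega)
      have := Finset.card_le_card hsub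
      rw [Finset.card_union_of_disjoint hdisj, Finset.card_range] at this
      omega
  · -- lower bound: witness set
    have hval : ∀ k, k < n / 2 → 2 * k % (n + 2) = 2 * k := by
      intro k hk
      exact Nat.mod_eq_of_lt (by omega)
    set S : Finset (Fin (n + 2)) :=
      (Finset.range (n / 2)).image
        (fun k => (⟨2 * k % (n + 2), Nat.mod_lt _ (by omega)⟩ : Fin (n + 2))) with hS
    have hScard : S.card = n / 2 := by
      rw [hS, Finset.card_image_of_injOn, Finset.card_range]
      intro a ha b hb h
      simp only [Finset.coe_range, Set.mem_Iio] at ha hb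
      have := congrArg Fin.val h
      simp only [Fin.val_mk] at this
      rw [hval a ha, hval b hb] at this
      omega
    have hSind : IsIndepFinset n S := by
      intro i hi j hj hadj
      rw [hS, Finset.mem_image] at hi hj
      obtain ⟨k, hk, rfl⟩ := hi
      obtain ⟨l, hl, rfl⟩ := hj
      rw [Finset.mem_range] at hk hl
      obtain ⟨hne, h⟩ := hadj
      have h2k : 2 * k + 1 < n := by omega
      have h2l : 2 * l + 1 < n := by omega
      simp only [Fin.val_mk, hval k hk, hval l hl] at h
      rcases h with h | h | ⟨_, _, h | h⟩
      · omega
      · omega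
      · rw [Nat.mod_eq_of_lt h2k] at h; omega
      · rw [Nat.mod_eq_of_lt h2l] at h; omega
    calc n / 2 = S.card := hScard.symm
      _ ≤ _ := Finset.le_sup (by simp [Finset.mem_filter, hSind])
end

section
/- (Proposition 6.3) For every n ≥ 4, the polynomials f_m ∈ ℚ[X] defined for m ≥ 2 by f_m = 1 + (m+2)·X + Σ_{k=2}^{⌊m/2⌋} (m/(m−k))·C(m−k, k)·X^k satisfy the recurrence f_n − f_{n−1} − X·f_{n−2} = −2·X². -/
open Polynomial

/-- The I-generating function of the standard projection `T(2,m)` of the `(2,m)`-torus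
link (`m ≥ 2`): `f_m = 1 + (m+2) X + Σ_{k=2}^{⌊m/2⌋} (m/(m-k)) C(m-k, k) X^k ∈ ℚ[X]`. -/
noncomputable def torusGen (m : ℕ) : ℚ[X] :=
  1 + C ((m : ℚ) + 2) * X +
    ∑ k ∈ Finset.Icc 2 (m / 2),
      C ((m : ℚ) / ((m : ℚ) - (k : ℚ)) * (Nat.choose (m - k) k : ℚ)) * X ^ k

def cc (m k : ℕ) : ℚ := (m : ℚ) / ((m : ℚ) - (k : ℚ)) * (Nat.choose (m - k) k : ℚ)

def dd (m k : ℕ) : ℚ := if k = 0 then 1 else if k = 1 then (m : ℚ) + 2 else cc m k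

lemma cc_zero (m k : ℕ) (hk : 1 ≤ k) (h : m / 2 < k) : cc m k = 0 := by
  have : Nat.choose (m - k) k = 0 := Nat.choose_eq_zero_of_lt (by omega)
  simp [cc, this]

lemma coeff_torusGen (m j : ℕ) : (torusGen m).coeff j = dd m j := by
  unfold torusGen dd cc
  rw [coeff_add, coeff_add, finset_sum_coeff]
  simp only [coeff_C_mul, coeff_X_pow, coeff_one, coeff_X, mul_ite, mul_one, mul_zero]
  rw [Finset.sum_ite_eq (Finset.Icc 2 (m / 2)) j]
  rcases j with _ | _ | j
  · simp
  · simp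
  · simp only [Finset.mem_Icc]
    have h2 : ¬ (j + 2 = 0) := by omega
    have h1 : ¬ (j + 2 = 1) := by omega
    by_cases h : j + 2 ≤ m / 2
    · simp [h, h1]
    · have hz : (m - (j + 2)).choose (j + 2) = 0 := Nat.choose_eq_zero_of_lt (by omega)
      simp [h, h1, hz]

lemma lemA (m k : ℕ) (hm : 2 ≤ m) (hk : 1 ≤ k) :
    cc m k = (Nat.choose (m - k) k : ℚ) + (Nat.choose (m - k - 1) (k - 1) : ℚ) := by
  unfold cc
  rcases lt_or_ge k m with h | h
  · obtain ⟨b, rfl⟩ : ∃ b, m = k + b + 1 := ⟨m - k - 1, by omega⟩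
    have e1 : k + b + 1 - k = b + 1 := by omega
    rw [e1, show b + 1 - 1 = b from rfl]
    have hnat : (b + 1) * Nat.choose b (k - 1) = Nat.choose (b + 1) k * k := by
      have := Nat.add_one_mul_choose_eq b (k - 1)
      rwa [show k - 1 + 1 = k by omega] at this
    have hQ : ((b : ℚ) + 1) * (Nat.choose b (k - 1) : ℚ)
        = (Nat.choose (b + 1) k : ℚ) * k := by exact_mod_cast hnat
    have hne : (k : ℚ) + (b : ℚ) + 1 - (k : ℚ) ≠ 0 := by
      intro hc; nlinarith [hc]
    push_cast
    rw [show (k : ℚ) + b + 1 - k = b + 1 by ring, div_mul_eq_mul_div, div_eq_iff (by positivity)]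
    linear_combination -hQ
  · have e1 : m - k = 0 := by omega
    have h1 : Nat.choose 0 k = 0 := Nat.choose_eq_zero_of_lt (by omega)
    have h2 : Nat.choose 0 (k - 1) = 0 := Nat.choose_eq_zero_of_lt (by omega)
    simp [e1, h1, h2]

lemma recur (a j : ℕ) : cc (a + 4) (j + 3) = cc (a + 3) (j + 3) + cc (a + 2) (j + 2) := by
  rw [lemA _ _ (by omega) (by omega), lemA _ _ (by omega) (by omega),
    lemA _ _ (by omega) (by omega)]
  rw [show a + 4 - (j + 3) = a + 1 - j by omega, show a + 1 - j - 1 = a - j by omega,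
    show a + 3 - (j + 3) = a - j by omega, show a + 2 - (j + 2) = a - j by omega,
    show j + 3 - 1 = j + 2 from rfl, show j + 2 - 1 = j + 1 from rfl]
  have key : Nat.choose (a + 1 - j) (j + 3)
      = Nat.choose (a - j) (j + 3) + Nat.choose (a - j - 1) (j + 2)
        + Nat.choose (a - j - 1) (j + 1) := by
    rcases le_or_gt (j + 1) a with h | h
    · obtain ⟨b, hb⟩ : ∃ b, a = b + j + 1 := ⟨a - j - 1, by omega⟩
      subst hb
      rw [show b + j + 1 + 1 - j = b + 2 by omega, show b + j + 1 - j = b + 1 by omega,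
        show b + 1 - 1 = b from rfl]
      rw [show b + 2 = b + 1 + 1 from rfl, Nat.choose_succ_succ (b + 1) (j + 2),
        Nat.choose_succ_succ b (j + 1)]
      simp only [Nat.succ_eq_add_one, show j + 2 + 1 = j + 3 by omega,
        show j + 1 + 1 = j + 2 by omega]
      omega
    · rw [Nat.choose_eq_zero_of_lt (show a + 1 - j < j + 3 by omega),
        Nat.choose_eq_zero_of_lt (show a - j < j + 3 by omega),
        Nat.choose_eq_zero_of_lt (show a - j - 1 < j + 2 by omega),
        Nat.choose_eq_zero_of_lt (show a - j - 1 < j + 1 by omega)]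
  have keyQ : (Nat.choose (a + 1 - j) (j + 3) : ℚ)
      = (Nat.choose (a - j) (j + 3) : ℚ) + (Nat.choose (a - j - 1) (j + 2) : ℚ)
        + (Nat.choose (a - j - 1) (j + 1) : ℚ) := by exact_mod_cast key
  linarith [keyQ]

/-- Proposition 6.3: for every `n ≥ 4`, the I-generating functions of the standard
`(2,m)`-torus link projections satisfy `f_n - f_{n-1} - X f_{n-2} = -2 X^2`. -/
theorem torusGen_recurrence (n : ℕ) (hn : 4 ≤ n) :
    torusGen n - torusGen (n - 1) - X * torusGen (n - 2) = -2 * X ^ 2 := by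
  obtain ⟨a, rfl⟩ : ∃ a, n = a + 4 := ⟨n - 4, by omega⟩
  rw [show a + 4 - 1 = a + 3 by omega, show a + 4 - 2 = a + 2 by omega]
  ext j
  rw [coeff_sub, coeff_sub, coeff_torusGen, coeff_torusGen]
  have hrhs : (-2 * X ^ 2 : ℚ[X]).coeff j = if j = 2 then -2 else 0 := by
    simp [coeff_X_pow]
    split_ifs <;> norm_num
  rw [hrhs]
  rcases j with _ | j
  · simp [dd, Polynomial.mul_coeff_zero]
  · rw [coeff_X_mul, coeff_torusGen]
    rcases j with _ | _ | j
    · simp only [dd]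
      norm_num
    · simp only [dd, cc, show ¬(2 = 0) by omega, show ¬(2 = 1) by omega,
        show ¬(1 = 0) by omega, if_false, if_true, if_neg, ite_false, ite_true,
        show (1 : ℕ) = 1 from rfl, if_pos]
      rw [show a + 4 - 2 = a + 2 by omega, show a + 3 - 2 = a + 1 by omega,
        Nat.cast_choose_two, Nat.cast_choose_two]
      have h1 : ((a : ℚ) + 2) ≠ 0 := by positivity
      have h2 : ((a : ℚ) + 1) ≠ 0 := by positivity
      push_cast
      rw [show (a : ℚ) + 4 - 2 = (a : ℚ) + 2 by ring, show (a : ℚ) + 3 - 2 = (a : ℚ) + 1 by ring]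
      field_simp
      ring
    · have hrec := recur a j
      simp only [dd, show ¬(j + 3 = 0) by omega, show ¬(j + 3 = 1) by omega,
        show ¬(j + 2 = 0) by omega, show ¬(j + 2 = 1) by omega, if_false,
        show ¬(j + 3 = 2) by omega, ite_false]
      simp only [show j + 1 + 1 + 1 = j + 3 by omega, show j + 1 + 1 = j + 2 by omega]
      linarith [hrec]
end

section
/- (Corollary 6.4) For every n ≥ 4, the polynomials f_m ∈ ℚ[X] defined for m ≥ 2 by f_m = 1 + (m+2)·X + Σ_{k=2}^{⌊m/2⌋} (m/(m−k))·C(m−k, k)·X^k satisfy f_n(1) = f_{n−1}(1) + f_{n−2}(1) − 2, i.e., the total numbers of isolated-region sets of the standard (2,n)-torus link projections satisfy this Fibonacci-like recurrence. -/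
open Polynomial

/-- Auxiliary integer term: `a m k = C(m-k, k) + C(m-k-1, k-1)`. -/
def torusA (m k : ℕ) : ℕ := Nat.choose (m - k) k + Nat.choose (m - k - 1) (k - 1)

lemma torusA_rec (m k : ℕ) (h2 : 2 ≤ k) (hk : 2 * k ≤ m) :
    torusA m k = torusA (m - 1) k + torusA (m - 2) (k - 1) := by
  obtain ⟨j, rfl⟩ : ∃ j, k = j + 2 := ⟨k - 2, by omega⟩
  obtain ⟨i, rfl⟩ : ∃ i, m = i + 2 * j + 4 := ⟨m - (2 * j + 4), by omega⟩
  simp only [torusA,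
    show i + 2 * j + 4 - (j + 2) = i + j + 2 from by omega,
    show i + j + 2 - 1 = i + j + 1 from by omega,
    show j + 2 - 1 = j + 1 from by omega,
    show i + 2 * j + 4 - 1 = i + 2 * j + 3 from by omega,
    show i + 2 * j + 3 - (j + 2) = i + j + 1 from by omega,
    show i + j + 1 - 1 = i + j from by omega,
    show i + 2 * j + 4 - 2 = i + 2 * j + 2 from by omega,
    show j + 2 - 1 = j + 1 from by omega,
    show i + 2 * j + 2 - (j + 1) = i + j + 1 from by omega,
    show j + 1 - 1 = j from by omega]
  rw [show i + j + 2 = (i + j + 1) + 1 from by omega, Nat.choose_succ_succ (i + j + 1) (j + 1),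
    show i + j + 1 = (i + j) + 1 from by omega, Nat.choose_succ_succ (i + j) j]
  simp only [Nat.succ_eq_add_one, show j + 1 + 1 = j + 2 from by omega]
  omega

lemma torusA_mul (m k : ℕ) (h2 : 2 ≤ k) (hk : 2 * k ≤ m) :
    m * Nat.choose (m - k) k = torusA m k * (m - k) := by
  obtain ⟨j, rfl⟩ : ∃ j, k = j + 2 := ⟨k - 2, by omega⟩
  obtain ⟨i, rfl⟩ : ∃ i, m = i + 2 * j + 4 := ⟨m - (2 * j + 4), by omega⟩
  simp only [torusA,
    show i + 2 * j + 4 - (j + 2) = i + j + 2 from by omega,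
    show i + j + 2 - 1 = i + j + 1 from by omega,
    show j + 2 - 1 = j + 1 from by omega]
  have h := Nat.add_one_mul_choose_eq (i + j + 1) (j + 1)
  rw [show i + j + 1 + 1 = i + j + 2 from by omega, show j + 1 + 1 = j + 2 from by omega] at h
  -- h : (i + j + 2) * choose (i + j + 1) (j + 1) = choose (i + j + 2) (j + 2) * (j + 2)
  nlinarith [h]

/-- Sum of the auxiliary terms. -/
def torusS (m : ℕ) : ℕ := ∑ k ∈ Finset.Icc 2 (m / 2), torusA m k

lemma torusS_rec (m : ℕ) (hm : 4 ≤ m) :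
    torusS m = torusS (m - 1) + torusS (m - 2) + (m - 2) := by
  have hM : 2 ≤ m / 2 := by omega
  have h1 : torusS m = (∑ k ∈ Finset.Icc 2 (m / 2), torusA (m - 1) k)
      + (∑ k ∈ Finset.Icc 2 (m / 2), torusA (m - 2) (k - 1)) := by
    rw [torusS, ← Finset.sum_add_distrib]
    refine Finset.sum_congr rfl fun k hk => ?_
    simp only [Finset.mem_Icc] at hk
    exact torusA_rec m k hk.1 (by omega)
  have h2 : (∑ k ∈ Finset.Icc 2 (m / 2), torusA (m - 1) k) = torusS (m - 1) := by
    rcases Nat.even_or_odd m with he | ho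
    · obtain ⟨t, rfl⟩ := he
      obtain ⟨N, rfl⟩ : ∃ N, t = N + 2 := ⟨t - 2, by omega⟩
      rw [torusS, show (N + 2 + (N + 2) - 1) / 2 = N + 1 from by omega,
        show (N + 2 + (N + 2)) / 2 = N + 2 from by omega,
        Finset.sum_Icc_succ_top (show 2 ≤ N + 2 from by omega)]
      have hz : torusA (N + 2 + (N + 2) - 1) (N + 2) = 0 := by
        rw [torusA, Nat.choose_eq_zero_of_lt (by omega),
          Nat.choose_eq_zero_of_lt (by omega)]
      rw [hz, add_zero]
    · obtain ⟨t, rfl⟩ := ho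
      rw [torusS, show (2 * t + 1 - 1) / 2 = (2 * t + 1) / 2 from by omega]
  have h3 : (∑ k ∈ Finset.Icc 2 (m / 2), torusA (m - 2) (k - 1))
      = (m - 2) + torusS (m - 2) := by
    have hshift : (∑ k ∈ Finset.Icc 2 (m / 2), torusA (m - 2) (k - 1))
        = ∑ j ∈ Finset.Icc 1 (m / 2 - 1), torusA (m - 2) j := by
      refine Finset.sum_nbij' (fun k => k - 1) (fun j => j + 1) ?_ ?_ ?_ ?_ ?_
      · intro k hk; simp only [Finset.mem_Icc] at *; omega
      · intro j hj; simp only [Finset.mem_Icc] at *; omega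
      · intro k hk; simp only [Finset.mem_Icc] at hk; omega
      · intro j hj; omega
      · intro k hk; rfl
    rw [hshift]
    have hins : Finset.Icc 1 (m / 2 - 1) = insert 1 (Finset.Icc 2 (m / 2 - 1)) := by
      ext x; simp only [Finset.mem_Icc, Finset.mem_insert]; omega
    rw [hins, Finset.sum_insert (by simp)]
    have ha1 : torusA (m - 2) 1 = m - 2 := by
      rw [torusA]
      norm_num
      omega
    have hd : (m - 2) / 2 = m / 2 - 1 := by omega
    rw [torusS, hd, ha1]
  rw [h1, h2, h3]
  omega

lemma torusGen_eval_one (m : ℕ) (hm : 2 ≤ m) :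
    (torusGen m).eval 1 = (m : ℚ) + 3 + (torusS m : ℚ) := by
  rw [torusGen]
  simp only [eval_add, eval_one, eval_mul, eval_C, eval_X, eval_finset_sum, eval_pow, mul_one,
    one_pow]
  have : (∑ k ∈ Finset.Icc 2 (m / 2), (m : ℚ) / ((m : ℚ) - (k : ℚ)) * (Nat.choose (m - k) k : ℚ))
      = (torusS m : ℚ) := by
    rw [torusS, Nat.cast_sum]
    refine Finset.sum_congr rfl fun k hk => ?_
    simp only [Finset.mem_Icc] at hk
    have hkm : 2 * k ≤ m := by omega
    have hklt : k < m := by omega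
    have hne : (m : ℚ) - (k : ℚ) ≠ 0 := by
      have : (k : ℚ) < (m : ℚ) := by exact_mod_cast hklt
      linarith
    rw [div_mul_eq_mul_div, div_eq_iff hne]
    have := torusA_mul m k hk.1 hkm
    have hcast : ((m : ℕ) : ℚ) * (Nat.choose (m - k) k : ℚ)
        = (torusA m k : ℚ) * ((m - k : ℕ) : ℚ) := by exact_mod_cast congrArg (Nat.cast : ℕ → ℚ) this
    rw [hcast, Nat.cast_sub (le_of_lt hklt)]
  rw [this]; ring

/-- Corollary 6.4: for every `n ≥ 4`, the total numbers of isolated-region sets of the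
standard `(2,n)`-torus link projections satisfy the Fibonacci-like recurrence
`f_n(1) = f_{n-1}(1) + f_{n-2}(1) - 2`. -/
theorem torusGen_eval_one_recurrence (n : ℕ) (hn : 4 ≤ n) :
    (torusGen n).eval 1 = (torusGen (n - 1)).eval 1 + (torusGen (n - 2)).eval 1 - 2 := by
  rw [torusGen_eval_one n (by omega), torusGen_eval_one (n - 1) (by omega),
    torusGen_eval_one (n - 2) (by omega), torusS_rec n hn]
  have h1 : ((n - 1 : ℕ) : ℚ) = (n : ℚ) - 1 := by
    rw [Nat.cast_sub (by omega)]; norm_num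
  have h2 : ((n - 2 : ℕ) : ℚ) = (n : ℚ) - 2 := by
    rw [Nat.cast_sub (by omega)]; norm_num
  rw [h1, h2]
  push_cast [h2]
  ring
end
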